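/- arXiv:1509.07632 — 4 statements merged into one kernel-verified Lean document; each statement's English description precedes it below -/
import Mathlib

section
/- Let U ⊣ R : B → A be an adjunction of codescent type (i.e. each unit component η_X : X → RU(X) is an equaliser) between accessible categories. Then an object X of A is presentable if and only if U(X) is presentable in B. -/
open CategoryTheory CategoryTheory.Limits Opposite

universe v u

section AccessiblePreamble

variable {C : Type u} [Category.{v} C]

/-- A small category `J` is `κ`-filtered if every diagram in `J` with fewer than `κ`
many morphisms admits a cocone. -/
def IsKappaFiltered (κ : Cardinal.{v}) (J : Type v) [SmallCategory J] : Prop :=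
  ∀ (K : Type v) [SmallCategory K],
    Cardinal.mk (Σ (a : K) (b : K), a ⟶ b) < κ →
      ∀ F : K ⥤ J, Nonempty (Limits.Cocone F)

/-- An object `X` is `κ`-presentable if its covariant hom-functor preserves colimits of
`κ`-filtered diagrams. -/
def IsKappaPresentable (κ : Cardinal.{v}) (X : C) : Prop :=
  ∀ (J : Type v) [SmallCategory J], IsKappaFiltered κ J →
    Nonempty (PreservesColimitsOfShape J (coyoneda.obj (op X)))

/-- An object is presentable if it is `κ`-presentable for some regular cardinal `κ`. -/
def IsPresentable (X : C) : Prop :=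
  ∃ κ : Cardinal.{v}, κ.IsRegular ∧ IsKappaPresentable κ X

variable (C)

/-- `C` has colimits of `κ`-filtered diagrams. -/
def HasKappaFilteredColimits (κ : Cardinal.{v}) : Prop :=
  ∀ (J : Type v) [SmallCategory J], IsKappaFiltered κ J → HasColimitsOfShape J C

/-- `C` is a `κ`-accessible category: `κ` is regular, `C` has `κ`-filtered colimits,
there is (up to isomorphism) only a small set of `κ`-presentable objects, and every
object is the colimit of a `κ`-filtered diagram of `κ`-presentable objects. -/
def IsKappaAccessibleCat (κ : Cardinal.{v}) : Prop :=
  κ.IsRegular ∧ HasKappaFilteredColimits C κ ∧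
  (∃ (ι : Type v) (G : ι → C), (∀ i, IsKappaPresentable κ (G i)) ∧
    ∀ X : C, IsKappaPresentable κ X → ∃ i, Nonempty (X ≅ G i)) ∧
  ∀ X : C, ∃ (J : Cat.{v, v}), IsKappaFiltered κ J ∧
    ∃ D : J ⥤ C, (∀ j : J, IsKappaPresentable κ (D.obj j)) ∧
      ∃ c : Cocone D, Nonempty (IsColimit c) ∧ Nonempty (c.pt ≅ X)

/-- `C` is an accessible category. -/
def IsAccessibleCat : Prop :=
  ∃ κ : Cardinal.{v}, IsKappaAccessibleCat C κ

/-- `C` is a locally presentable category: accessible and cocomplete. -/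
def IsLocallyPresentableCat : Prop :=
  IsAccessibleCat C ∧ HasColimits C

variable {C} {D : Type u} [Category.{v} D]

/-- A functor between accessible categories is accessible if it preserves `κ`-filtered
colimits for some regular cardinal `κ`. -/
def IsAccessibleFunctor (F : C ⥤ D) : Prop :=
  ∃ κ : Cardinal.{v}, κ.IsRegular ∧
    ∀ (J : Type v) [SmallCategory J], IsKappaFiltered κ J →
      Nonempty (PreservesColimitsOfShape J F)

end AccessiblePreamble

section Helpers

variable {C : Type u} [Category.{v} C]

lemma kappaFiltered_of_le {κ lam : Cardinal.{v}} (h : κ ≤ lam) {J : Type v} [SmallCategory J]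
    (hJ : IsKappaFiltered lam J) : IsKappaFiltered κ J :=
  fun K _ hK F => hJ K (hK.trans_le h) F

lemma presentable_of_le {κ lam : Cardinal.{v}} (h : κ ≤ lam) {X : C}
    (hX : IsKappaPresentable κ X) : IsKappaPresentable lam X :=
  fun J _ hJ => hX J (kappaFiltered_of_le h hJ)

lemma presentable_of_iso {κ : Cardinal.{v}} {X Y : C} (e : X ≅ Y)
    (hX : IsKappaPresentable κ X) : IsKappaPresentable κ Y := by
  intro J _ hJ
  obtain ⟨h⟩ := hX J hJ
  haveI := h
  exact ⟨preservesColimitsOfShape_of_natIso (coyoneda.mapIso e.symm.op)⟩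

lemma mk_sigma_hom_le (K : Type v) [SmallCategory K] [Quiver.IsThin K] :
    Cardinal.mk (Σ (a : K) (b : K), a ⟶ b) ≤ Cardinal.mk K * Cardinal.mk K := by
  have h := Cardinal.mk_le_of_injective
    (f := fun x : (Σ (a : K) (b : K), a ⟶ b) => ((x.1, x.2.1) : K × K)) ?_
  · simpa using h
  · rintro ⟨a, b, f⟩ ⟨c, d, g⟩ h
    obtain ⟨rfl, rfl⟩ : a = c ∧ b = d := by simpa [Prod.ext_iff] using h
    obtain rfl : f = g := Subsingleton.elim f g
    rfl

lemma cocone_nonempty_of_finCat {κ : Cardinal.{v}} (hκ : κ.IsRegular) {J : Type v}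
    [SmallCategory J] (hJ : IsKappaFiltered κ J) (K : Type) [SmallCategory K] [FinCategory K]
    (F : K ⥤ J) : Nonempty (Cocone F) := by
  have e : (Σ (a : AsSmall.{v} K) (b : AsSmall.{v} K), a ⟶ b) ≃ (Σ (a : K) (b : K), a ⟶ b) :=
    { toFun := fun x => ⟨ULift.down x.1, ULift.down x.2.1, ULift.down x.2.2⟩
      invFun := fun x => ⟨⟨x.1⟩, ⟨x.2.1⟩, ⟨x.2.2⟩⟩
      left_inv := fun _ => rfl
      right_inv := fun _ => rfl }
  haveI : Finite (Σ (a : AsSmall.{v} K) (b : AsSmall.{v} K), a ⟶ b) := Finite.of_equiv _ e.symm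
  have hcard : Cardinal.mk (Σ (a : AsSmall.{v} K) (b : AsSmall.{v} K), a ⟶ b) < κ :=
    lt_of_lt_of_le (Cardinal.mk_lt_aleph0_iff.mpr inferInstance) hκ.aleph0_le
  obtain ⟨c⟩ := hJ (AsSmall.{v} K) hcard (AsSmall.down ⋙ F)
  refine ⟨⟨c.pt, ⟨fun k => c.ι.app (AsSmall.up.obj k), ?_⟩⟩⟩
  intro a b f
  have h := c.ι.naturality (AsSmall.up.map f)
  simp only [Functor.const_obj_map, Category.comp_id] at h
  exact h


lemma isFiltered_of_kappaFiltered {κ : Cardinal.{v}} (hκ : κ.IsRegular) {J : Type v}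
    [SmallCategory J] (hJ : IsKappaFiltered κ J) : IsFiltered J := by
  have hne : Nonempty J := by
    obtain ⟨c⟩ := cocone_nonempty_of_finCat hκ hJ (Discrete PEmpty)
      (Discrete.functor (fun x => x.elim))
    exact ⟨c.pt⟩
  have h1 : ∀ X Y : J, ∃ (Z : J) (_ : X ⟶ Z) (_ : Y ⟶ Z), True := by
    intro X Y
    obtain ⟨c⟩ := cocone_nonempty_of_finCat hκ hJ (Discrete Bool)
      (Discrete.functor (fun b => cond b X Y))
    exact ⟨c.pt, c.ι.app ⟨true⟩, c.ι.app ⟨false⟩, trivial⟩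
  have h2 : ∀ ⦃X Y : J⦄ (f g : X ⟶ Y), ∃ (Z : J) (h : Y ⟶ Z), f ≫ h = g ≫ h := by
    intro X Y f g
    obtain ⟨c⟩ := cocone_nonempty_of_finCat hκ hJ WalkingParallelPair (parallelPair f g)
    refine ⟨c.pt, c.ι.app WalkingParallelPair.one, ?_⟩
    have hl := c.ι.naturality WalkingParallelPairHom.left
    have hr := c.ι.naturality WalkingParallelPairHom.right
    simp only [parallelPair_map_left, parallelPair_map_right, Functor.const_obj_map,
      Category.comp_id] at hl hr
    rw [hl, hr]
  exact { toIsFilteredOrEmpty := ⟨h1, h2⟩, nonempty := hne }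

lemma exists_upper_bound {κ : Cardinal.{v}} (hκ : κ.IsRegular) {J : Type v} [SmallCategory J]
    (hJ : IsKappaFiltered κ J) {ι : Type v} (hι : Cardinal.mk ι < κ) (X : ι → J) :
    ∃ (Z : J) (_ : ∀ i, X i ⟶ Z), True := by
  have hcard : Cardinal.mk (Σ (a : Discrete ι) (b : Discrete ι), a ⟶ b) < κ := by
    refine lt_of_le_of_lt (mk_sigma_hom_le _) ?_
    have : Cardinal.mk (Discrete ι) = Cardinal.mk ι := Cardinal.mk_congr (discreteEquiv)
    rw [this]
    exact Cardinal.mul_lt_of_lt hκ.aleph0_le hι hι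
  obtain ⟨c⟩ := hJ (Discrete ι) hcard (Discrete.functor X)
  exact ⟨c.pt, fun i => c.ι.app ⟨i⟩, trivial⟩

lemma exists_fan_bound {κ : Cardinal.{v}} (hκ : κ.IsRegular) {J : Type v} [SmallCategory J]
    (hJ : IsKappaFiltered κ J) {ι : Type v} (hι : Cardinal.mk ι < κ) (Z : J) (X : ι → J)
    (f : ∀ i, Z ⟶ X i) :
    ∃ (W : J) (g : Z ⟶ W) (h : ∀ i, X i ⟶ W), ∀ i, f i ≫ h i = g := by
  have hcard : Cardinal.mk (Σ (a : WidePushoutShape ι) (b : WidePushoutShape ι), a ⟶ b) < κ := by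
    refine lt_of_le_of_lt (mk_sigma_hom_le _) ?_
    have h1 : Cardinal.mk (WidePushoutShape ι) < κ := by
      have : Cardinal.mk (WidePushoutShape ι) = Cardinal.mk ι + 1 := Cardinal.mk_option
      rw [this]
      exact Cardinal.add_lt_of_lt hκ.aleph0_le hι
        (lt_of_lt_of_le Cardinal.one_lt_aleph0 hκ.aleph0_le)
    exact Cardinal.mul_lt_of_lt hκ.aleph0_le h1 h1
  obtain ⟨c⟩ := hJ (WidePushoutShape ι) hcard (WidePushoutShape.wideSpan Z X f)
  refine ⟨c.pt, c.ι.app none, fun i => c.ι.app (some i), fun i => ?_⟩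
  have h := c.ι.naturality (WidePushoutShape.Hom.init i)
  simp only [Functor.const_obj_map, Category.comp_id] at h
  exact h.trans (Category.comp_id _)


lemma pres_factor {κ : Cardinal.{v}} {X : C} (hX : IsKappaPresentable κ X)
    {I : Type v} [SmallCategory I] (hI : IsKappaFiltered κ I)
    {E : I ⥤ C} {e : Cocone E} (he : IsColimit e) (f : X ⟶ e.pt) :
    ∃ (i : I) (g : X ⟶ E.obj i), g ≫ e.ι.app i = f := by
  obtain ⟨h⟩ := hX I hI
  haveI := h
  have he' : IsColimit ((coyoneda.obj (op X)).mapCocone e) :=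
    isColimitOfPreserves (coyoneda.obj (op X)) he
  obtain ⟨i, g, hg⟩ := Types.jointly_surjective _ he' f
  exact ⟨i, g, hg⟩

lemma pres_eq {κ : Cardinal.{v}} (hκ : κ.IsRegular) {X : C} (hX : IsKappaPresentable κ X)
    {I : Type v} [SmallCategory I] (hI : IsKappaFiltered κ I)
    {E : I ⥤ C} {e : Cocone E} (he : IsColimit e) {i : I} (g₁ g₂ : X ⟶ E.obj i)
    (hg : g₁ ≫ e.ι.app i = g₂ ≫ e.ι.app i) :
    ∃ (k : I) (m : i ⟶ k), g₁ ≫ E.map m = g₂ ≫ E.map m := by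
  obtain ⟨h⟩ := hX I hI
  haveI := h
  haveI : IsFiltered I := isFiltered_of_kappaFiltered hκ hI
  have he' : IsColimit ((coyoneda.obj (op X)).mapCocone e) :=
    isColimitOfPreserves (coyoneda.obj (op X)) he
  have heq : ((coyoneda.obj (op X)).mapCocone e).ι.app i g₁
      = ((coyoneda.obj (op X)).mapCocone e).ι.app i g₂ := hg
  obtain ⟨k, φ, ψ, hφψ⟩ := (Types.FilteredColimit.isColimit_eq_iff _ he').mp heq
  have hφψ' : g₁ ≫ E.map φ = g₂ ≫ E.map ψ := hφψ
  refine ⟨IsFiltered.coeq φ ψ, φ ≫ IsFiltered.coeqHom φ ψ, ?_⟩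
  calc g₁ ≫ E.map (φ ≫ IsFiltered.coeqHom φ ψ)
      = (g₁ ≫ E.map φ) ≫ E.map (IsFiltered.coeqHom φ ψ) := by simp
    _ = (g₂ ≫ E.map ψ) ≫ E.map (IsFiltered.coeqHom φ ψ) := by rw [hφψ']
    _ = g₂ ≫ E.map (ψ ≫ IsFiltered.coeqHom φ ψ) := by simp
    _ = g₂ ≫ E.map (φ ≫ IsFiltered.coeqHom φ ψ) := by
        rw [← IsFiltered.coeq_condition φ ψ]


lemma isKappaPresentable_colimit {κ lam : Cardinal.{v}} (hκ : κ.IsRegular)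
    (hlam : lam.IsRegular) (hκlam : κ ≤ lam) {J : Type v} [SmallCategory J]
    (hJsize : Cardinal.mk (Σ (a : J) (b : J), a ⟶ b) < lam)
    (D : J ⥤ C) (hD : ∀ j, IsKappaPresentable κ (D.obj j))
    (c : Cocone D) (hc : IsColimit c) : IsKappaPresentable lam c.pt := by
  have hJobj : Cardinal.mk J < lam := by
    refine lt_of_le_of_lt (Cardinal.mk_le_of_injective
      (f := fun a : J => (⟨a, a, 𝟙 a⟩ : Σ (a : J) (b : J), a ⟶ b)) ?_) hJsize
    intro a b h
    exact congrArg Sigma.fst h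
  intro I _ hI
  have hIκ : IsKappaFiltered κ I := kappaFiltered_of_le hκlam hI
  haveI hIfil : IsFiltered I := isFiltered_of_kappaFiltered hlam hI
  refine ⟨⟨fun {E} => ⟨fun {e} he => ⟨Types.FilteredColimit.isColimitOf _ _ ?_ ?_⟩⟩⟩⟩
  · -- surjectivity
    intro f
    choose i g hg using fun j => pres_factor (hD j) hIκ he (c.ι.app j ≫ f)
    obtain ⟨Z, u, -⟩ := exists_upper_bound hlam hI hJobj i
    have hhZ : ∀ j, (g j ≫ E.map (u j)) ≫ e.ι.app Z = c.ι.app j ≫ f := by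
      intro j
      rw [Category.assoc, e.w (u j), hg j]
    have step3 : ∀ m : Σ (a : J) (b : J), a ⟶ b, ∃ (k : I) (w : Z ⟶ k),
        (D.map m.2.2 ≫ (g m.2.1 ≫ E.map (u m.2.1))) ≫ E.map w
          = (g m.1 ≫ E.map (u m.1)) ≫ E.map w := by
      rintro ⟨a, b, φ⟩
      refine pres_eq hκ (hD a) hIκ he _ _ ?_
      rw [Category.assoc, hhZ b, hhZ a, ← Category.assoc, c.w φ]
    choose k w hw using step3
    obtain ⟨W, ψ₀, ψ, hψ⟩ := exists_fan_bound hlam hI hJsize Z k w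
    have natl : ∀ {a b : J} (φ : a ⟶ b),
        D.map φ ≫ ((g b ≫ E.map (u b)) ≫ E.map ψ₀)
          = (g a ≫ E.map (u a)) ≫ E.map ψ₀ := by
      intro a b φ
      rw [← hψ ⟨a, b, φ⟩, E.map_comp]
      rw [← Category.assoc, ← Category.assoc]
      rw [show (D.map φ ≫ g b ≫ E.map (u b)) ≫ E.map (w ⟨a, b, φ⟩)
        = (g a ≫ E.map (u a)) ≫ E.map (w ⟨a, b, φ⟩) from hw ⟨a, b, φ⟩]
      rw [Category.assoc, Category.assoc]
    let s : Cocone D :=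
      ⟨E.obj W, ⟨fun j => (g j ≫ E.map (u j)) ≫ E.map ψ₀, by intro a b φ; simpa using natl φ⟩⟩
    refine ⟨W, hc.desc s, ?_⟩
    show f = hc.desc s ≫ e.ι.app W
    refine hc.hom_ext fun j => ?_
    rw [hc.fac_assoc]
    show c.ι.app j ≫ f = ((g j ≫ E.map (u j)) ≫ E.map ψ₀) ≫ e.ι.app W
    rw [Category.assoc, e.w ψ₀, hhZ j]
  · -- injectivity
    intro i j p q hpq
    have hpq' : p ≫ e.ι.app i = q ≫ e.ι.app j := hpq
    have hpq2 : p ≫ E.map (IsFiltered.leftToMax i j) ≫ e.ι.app (IsFiltered.max i j)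
        = q ≫ E.map (IsFiltered.rightToMax i j) ≫ e.ι.app (IsFiltered.max i j) := by
      rw [e.w, e.w, hpq']
    have step : ∀ a : J, ∃ (k : I) (r : IsFiltered.max i j ⟶ k),
        (c.ι.app a ≫ p ≫ E.map (IsFiltered.leftToMax i j)) ≫ E.map r
          = (c.ι.app a ≫ q ≫ E.map (IsFiltered.rightToMax i j)) ≫ E.map r := by
      intro a
      refine pres_eq hκ (hD a) hIκ he _ _ ?_
      simp only [Category.assoc]
      rw [hpq2]
    choose k r hr using step
    obtain ⟨W, ψ₀, ψ, hψ⟩ := exists_fan_bound hlam hI hJobj (IsFiltered.max i j) k r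
    have key : (p ≫ E.map (IsFiltered.leftToMax i j)) ≫ E.map ψ₀
        = (q ≫ E.map (IsFiltered.rightToMax i j)) ≫ E.map ψ₀ := by
      refine hc.hom_ext fun a => ?_
      rw [← hψ a, E.map_comp]
      have h2 := congrArg (fun t => t ≫ E.map (ψ a)) (hr a)
      simp only [Category.assoc] at h2 ⊢
      exact h2
    refine ⟨W, IsFiltered.leftToMax i j ≫ ψ₀, IsFiltered.rightToMax i j ≫ ψ₀, ?_⟩
    show p ≫ E.map (IsFiltered.leftToMax i j ≫ ψ₀) = q ≫ E.map (IsFiltered.rightToMax i j ≫ ψ₀)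
    rw [E.map_comp, E.map_comp, ← Category.assoc, ← Category.assoc]
    exact key


lemma exists_presentable {κ : Cardinal.{v}} (h : IsKappaAccessibleCat C κ) (X : C) :
    ∃ lam : Cardinal.{v}, lam.IsRegular ∧ κ ≤ lam ∧ IsKappaPresentable lam X := by
  obtain ⟨hκ, hcolim, hsmall, hpres⟩ := h
  obtain ⟨J, hJfilt, D, hD, c, ⟨hc⟩, ⟨e⟩⟩ := hpres X
  refine ⟨Order.succ (max κ (Cardinal.mk (Σ (a : J) (b : J), a ⟶ b))), ?_, ?_, ?_⟩
  · exact Cardinal.isRegular_succ (hκ.aleph0_le.trans (le_max_left _ _))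
  · exact (le_max_left _ _).trans (Order.le_succ _)
  · refine presentable_of_iso e (isKappaPresentable_colimit hκ
      (Cardinal.isRegular_succ (hκ.aleph0_le.trans (le_max_left _ _)))
      ((le_max_left _ _).trans (Order.le_succ _))
      ((le_max_right _ _).trans_lt (Order.lt_succ _)) D hD c hc)

lemma isIso_of_presentable_bijective {κ : Cardinal.{v}} (hacc : IsKappaAccessibleCat C κ)
    {X Y : C} (f : X ⟶ Y)
    (hbij : ∀ Z : C, IsKappaPresentable κ Z → Function.Bijective (fun g : Z ⟶ X => g ≫ f)) :
    IsIso f := by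
  obtain ⟨hκ, hcolim, hsmall, hpres⟩ := hacc
  obtain ⟨J, hJf, D, hD, c, ⟨hc⟩, ⟨e⟩⟩ := hpres Y
  have hx : ∀ j : J, ∃ x : D.obj j ⟶ X, x ≫ f = c.ι.app j ≫ e.hom :=
    fun j => (hbij _ (hD j)).2 (c.ι.app j ≫ e.hom)
  choose x hx using hx
  have nat : ∀ {a b : J} (φ : a ⟶ b), D.map φ ≫ x b = x a := by
    intro a b φ
    refine (hbij _ (hD a)).1 ?_
    show (D.map φ ≫ x b) ≫ f = x a ≫ f
    rw [Category.assoc, hx b, hx a, ← Category.assoc, c.w φ]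
  let s : Cocone D := ⟨X, ⟨fun j => x j, by intro a b φ; simpa using nat φ⟩⟩
  have hg'f : hc.desc s ≫ f = e.hom := by
    refine hc.hom_ext fun j => ?_
    rw [← Category.assoc, hc.fac]
    exact hx j
  have hgf : (e.inv ≫ hc.desc s) ≫ f = 𝟙 Y := by
    rw [Category.assoc, hg'f, e.inv_hom_id]
  have key : ∀ (Z : C), IsKappaPresentable κ Z → ∀ h : Z ⟶ X,
      h ≫ f ≫ (e.inv ≫ hc.desc s) = h := by
    intro Z hZ h
    refine (hbij Z hZ).1 ?_
    show (h ≫ f ≫ e.inv ≫ hc.desc s) ≫ f = h ≫ f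
    simp only [Category.assoc]
    rw [hg'f, e.inv_hom_id, Category.comp_id]
  obtain ⟨J₂, hJ₂f, D₂, hD₂, c₂, ⟨hc₂⟩, ⟨e₂⟩⟩ := hpres X
  have h3 : e₂.hom ≫ f ≫ (e.inv ≫ hc.desc s) = e₂.hom ≫ 𝟙 X := by
    refine hc₂.hom_ext fun j => ?_
    rw [Category.comp_id, ← Category.assoc]
    exact key _ (hD₂ j) (c₂.ι.app j ≫ e₂.hom)
  have hfg : f ≫ (e.inv ≫ hc.desc s) = 𝟙 X := by
    have := congrArg (fun t => e₂.inv ≫ t) h3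
    simpa using this
  exact ⟨e.inv ≫ hc.desc s, hfg, hgf⟩

end Helpers

section RightAdjoint

variable {A : Type u} [Category.{v} A] {B : Type u} [Category.{v} B]

lemma rightAdjoint_accessible {κA : Cardinal.{v}} (hAκ : IsKappaAccessibleCat A κA)
    {κB : Cardinal.{v}} (hBκ : IsKappaAccessibleCat B κB)
    (U : A ⥤ B) (R : B ⥤ A) (adj : U ⊣ R) :
    ∃ lam : Cardinal.{v}, lam.IsRegular ∧ κA ≤ lam ∧ κB ≤ lam ∧
      ∀ (J : Type v) [SmallCategory J], IsKappaFiltered lam J →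
        Nonempty (PreservesColimitsOfShape J R) := by
  obtain ⟨ι, G, hGpres, hGall⟩ := hAκ.2.2.1
  choose mu hmureg hmuB hmupres using fun i : ι => exists_presentable hBκ (U.obj (G i))
  have hbase : Cardinal.aleph0 ≤ max (max κA κB) (iSup mu) :=
    hAκ.1.aleph0_le.trans ((le_max_left _ _).trans (le_max_left _ _))
  have hlam : (Order.succ (max (max κA κB) (iSup mu))).IsRegular := Cardinal.isRegular_succ hbase
  set lam := Order.succ (max (max κA κB) (iSup mu)) with hlamdef
  have hκAlam : κA ≤ lam := ((le_max_left _ _).trans (le_max_left _ _)).trans (Order.le_succ _)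
  have hκBlam : κB ≤ lam := ((le_max_right _ _).trans (le_max_left _ _)).trans (Order.le_succ _)
  have hmulam : ∀ i, mu i ≤ lam := fun i =>
    ((le_ciSup (Cardinal.bddAbove_range mu) i).trans (le_max_right _ _)).trans (Order.le_succ _)
  refine ⟨lam, hlam, hκAlam, hκBlam, ?_⟩
  intro J _ hJ
  have hJA : IsKappaFiltered κA J := kappaFiltered_of_le hκAlam hJ
  haveI : HasColimitsOfShape J A := hAκ.2.1 J hJA
  haveI hJfil : IsFiltered J := isFiltered_of_kappaFiltered hlam hJ
  have hUZ : ∀ Z : A, IsKappaPresentable κA Z → IsKappaPresentable lam (U.obj Z) := by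
    intro Z hZ
    obtain ⟨i, ⟨eZ⟩⟩ := hGall Z hZ
    exact presentable_of_iso (U.mapIso eZ).symm (presentable_of_le (hmulam i) (hmupres i))
  refine ⟨⟨fun {E} => ⟨fun {cc} hcolim => ?_⟩⟩⟩
  have ht : IsColimit (colimit.cocone (E ⋙ R)) := colimit.isColimit _
  have hfac : ∀ j : J, (colimit.cocone (E ⋙ R)).ι.app j ≫ ht.desc (R.mapCocone cc)
      = R.map (cc.ι.app j) := fun j => ht.fac (R.mapCocone cc) j
  have hiso : IsIso (ht.desc (R.mapCocone cc)) := by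
    refine isIso_of_presentable_bijective hAκ _ ?_
    intro Z hZ
    constructor
    · -- injective
      intro g₁ g₂ hg
      have hg' : g₁ ≫ ht.desc (R.mapCocone cc) = g₂ ≫ ht.desc (R.mapCocone cc) := hg
      obtain ⟨j₁, v₁, hv₁⟩ := pres_factor hZ hJA ht g₁
      obtain ⟨j₂, v₂, hv₂⟩ := pres_factor hZ hJA ht g₂
      have hw₁ : (v₁ ≫ (E ⋙ R).map (IsFiltered.leftToMax j₁ j₂))
          ≫ (colimit.cocone (E ⋙ R)).ι.app (IsFiltered.max j₁ j₂) = g₁ := by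
        rw [Category.assoc, (colimit.cocone (E ⋙ R)).w, hv₁]
      have hw₂ : (v₂ ≫ (E ⋙ R).map (IsFiltered.rightToMax j₁ j₂))
          ≫ (colimit.cocone (E ⋙ R)).ι.app (IsFiltered.max j₁ j₂) = g₂ := by
        rw [Category.assoc, (colimit.cocone (E ⋙ R)).w, hv₂]
      set w₁ := v₁ ≫ (E ⋙ R).map (IsFiltered.leftToMax j₁ j₂) with hw₁def
      set w₂ := v₂ ≫ (E ⋙ R).map (IsFiltered.rightToMax j₁ j₂) with hw₂def
      have heqR : w₁ ≫ R.map (cc.ι.app (IsFiltered.max j₁ j₂))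
          = w₂ ≫ R.map (cc.ι.app (IsFiltered.max j₁ j₂)) := by
        rw [← hfac, ← Category.assoc, ← Category.assoc, hw₁, hw₂, hg']
      have heqB : (adj.homEquiv Z _).symm w₁ ≫ cc.ι.app (IsFiltered.max j₁ j₂)
          = (adj.homEquiv Z _).symm w₂ ≫ cc.ι.app (IsFiltered.max j₁ j₂) := by
        rw [← adj.homEquiv_naturality_right_symm, ← adj.homEquiv_naturality_right_symm, heqR]
      obtain ⟨k, m, hm⟩ := pres_eq hlam (hUZ Z hZ) hJ hcolim _ _ heqB
      have hback : w₁ ≫ (E ⋙ R).map m = w₂ ≫ (E ⋙ R).map m := by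
        have := congrArg (adj.homEquiv Z (E.obj k)) hm
        rw [adj.homEquiv_naturality_right, adj.homEquiv_naturality_right,
          Equiv.apply_symm_apply, Equiv.apply_symm_apply] at this
        exact this
      rw [← hw₁, ← hw₂, ← (colimit.cocone (E ⋙ R)).w m, ← Category.assoc, ← Category.assoc,
        hback]
    · -- surjective
      intro h
      obtain ⟨j, u, hu⟩ := pres_factor (hUZ Z hZ) hJ hcolim ((adj.homEquiv Z cc.pt).symm h)
      refine ⟨adj.homEquiv Z (E.obj j) u ≫ (colimit.cocone (E ⋙ R)).ι.app j, ?_⟩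
      show (adj.homEquiv Z (E.obj j) u ≫ (colimit.cocone (E ⋙ R)).ι.app j)
        ≫ ht.desc (R.mapCocone cc) = h
      rw [Category.assoc, hfac, ← adj.homEquiv_naturality_right, hu]
      exact (adj.homEquiv Z cc.pt).apply_symm_apply h
  haveI := hiso
  exact ⟨IsColimit.ofPointIso ht⟩

end RightAdjoint

/-- Let `U ⊣ R : B → A` be an adjunction of codescent type (i.e. each unit component
`η_X : X → RU(X)` is an equaliser of the pair `η_{RU(X)}, RU(η_X)`) between accessible
categories.  Then an object `X` of `A` is presentable if and only if `U(X)` is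
presentable in `B`. -/
theorem presentable_iff_of_codescent_adjunction
    {A : Type u} [Category.{v} A] {B : Type u} [Category.{v} B]
    (hA : IsAccessibleCat A) (hB : IsAccessibleCat B)
    (U : A ⥤ B) (R : B ⥤ A) (adj : U ⊣ R)
    (hw : ∀ X : A, adj.unit.app X ≫ adj.unit.app ((U ⋙ R).obj X) =
      adj.unit.app X ≫ (U ⋙ R).map (adj.unit.app X))
    (hcodescent : ∀ X : A,
      Nonempty (Limits.IsLimit (Limits.Fork.ofι (adj.unit.app X) (hw X))))
    (X : A) :
    _root_.IsPresentable X ↔ _root_.IsPresentable (U.obj X) := by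
  obtain ⟨κA, hAκ⟩ := hA
  obtain ⟨κB, hBκ⟩ := hB
  obtain ⟨lamR, hlamR, hκAlamR, hκBlamR, hR⟩ := rightAdjoint_accessible hAκ hBκ U R adj
  have hnat : ∀ {Y Y' : A} (w : Y ⟶ Y'),
      w ≫ adj.unit.app Y' = adj.unit.app Y ≫ R.map (U.map w) := by
    intro Y Y' w
    simpa using (adj.unit.naturality w).symm
  have hw' : ∀ Y : A, adj.unit.app Y ≫ adj.unit.app (R.obj (U.obj Y)) =
      adj.unit.app Y ≫ R.map (U.map (adj.unit.app Y)) := fun Y => hw Y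
  have hmono : ∀ (Y : A) {W : A} (a b : W ⟶ Y),
      a ≫ adj.unit.app Y = b ≫ adj.unit.app Y → a = b := by
    intro Y W a b hab
    refine Fork.IsLimit.hom_ext (hcodescent Y).some ?_
    simpa using hab
  constructor
  · rintro ⟨κ, hκ, hX⟩
    refine ⟨Order.succ (max κ lamR),
      Cardinal.isRegular_succ (hκ.aleph0_le.trans (le_max_left _ _)), ?_⟩
    intro J _ hJ
    have hJκ : IsKappaFiltered κ J :=
      kappaFiltered_of_le ((le_max_left _ _).trans (Order.le_succ _)) hJ
    have hJR : IsKappaFiltered lamR J :=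
      kappaFiltered_of_le ((le_max_right _ _).trans (Order.le_succ _)) hJ
    obtain ⟨hRpres⟩ := hR J hJR
    obtain ⟨hXpres⟩ := hX J hJκ
    haveI := hRpres
    haveI := hXpres
    have iso : coyoneda.obj (op (U.obj X)) ≅ R ⋙ coyoneda.obj (op X) := by
      refine NatIso.ofComponents (fun Y => (adj.homEquiv X Y).toIso) ?_
      intro Y Y' g
      ext u
      exact adj.homEquiv_naturality_right u g
    exact ⟨preservesColimitsOfShape_of_natIso iso.symm⟩
  · rintro ⟨κ, hκ, hUX⟩
    refine ⟨Order.succ (max κ lamR),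
      Cardinal.isRegular_succ (hκ.aleph0_le.trans (le_max_left _ _)), ?_⟩
    intro J _ hJ
    have hJκ : IsKappaFiltered κ J :=
      kappaFiltered_of_le ((le_max_left _ _).trans (Order.le_succ _)) hJ
    have hJR : IsKappaFiltered lamR J :=
      kappaFiltered_of_le ((le_max_right _ _).trans (Order.le_succ _)) hJ
    haveI hJfil : IsFiltered J := isFiltered_of_kappaFiltered hκ hJκ
    obtain ⟨hRpres⟩ := hR J hJR
    haveI := hRpres
    haveI : PreservesColimitsOfShape J U :=
      adj.leftAdjoint_preservesColimits.preservesColimitsOfShape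
    refine ⟨⟨fun {D} => ⟨fun {c} hcolim => ⟨Types.FilteredColimit.isColimitOf _ _ ?_ ?_⟩⟩⟩⟩
    · -- surjectivity
      intro f
      have hUc : IsColimit (U.mapCocone c) := isColimitOfPreserves U hcolim
      have hUT : IsColimit ((U ⋙ R ⋙ U).mapCocone c) :=
        isColimitOfPreserves (U ⋙ R ⋙ U) hcolim
      obtain ⟨j, u, hu⟩ := pres_factor hUX hJκ hUc (U.map f)
      have hu' : u ≫ U.map (c.ι.app j) = U.map f := hu
      have hkey : adj.homEquiv X (U.obj (D.obj j)) u ≫ R.map (U.map (c.ι.app j))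
          = f ≫ adj.unit.app c.pt := by
        rw [← adj.homEquiv_naturality_right, hu', adj.homEquiv_unit]
        simpa using (adj.unit.naturality f).symm
      set v := adj.homEquiv X (U.obj (D.obj j)) u with hvdef
      have hαβ : (v ≫ adj.unit.app (R.obj (U.obj (D.obj j))))
            ≫ R.map (U.map (R.map (U.map (c.ι.app j))))
          = (v ≫ R.map (U.map (adj.unit.app (D.obj j))))
            ≫ R.map (U.map (R.map (U.map (c.ι.app j)))) := by
        calc (v ≫ adj.unit.app (R.obj (U.obj (D.obj j))))
              ≫ R.map (U.map (R.map (U.map (c.ι.app j))))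
            = v ≫ (R.map (U.map (c.ι.app j)) ≫ adj.unit.app (R.obj (U.obj c.pt))) := by
              rw [Category.assoc, ← hnat (R.map (U.map (c.ι.app j)))]
              rfl
          _ = (f ≫ adj.unit.app c.pt) ≫ adj.unit.app (R.obj (U.obj c.pt)) := by
              rw [← Category.assoc, hkey]
          _ = (f ≫ adj.unit.app c.pt) ≫ R.map (U.map (adj.unit.app c.pt)) := by
              rw [Category.assoc, Category.assoc, hw' c.pt]
          _ = v ≫ R.map (U.map (c.ι.app j)) ≫ R.map (U.map (adj.unit.app c.pt)) := by
              rw [← Category.assoc, hkey]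
          _ = v ≫ R.map (U.map (c.ι.app j ≫ adj.unit.app c.pt)) := by
              rw [← R.map_comp, ← U.map_comp]
          _ = v ≫ R.map (U.map (adj.unit.app (D.obj j) ≫ R.map (U.map (c.ι.app j)))) := by
              rw [hnat (Y' := c.pt) (c.ι.app j)]
          _ = (v ≫ R.map (U.map (adj.unit.app (D.obj j))))
              ≫ R.map (U.map (R.map (U.map (c.ι.app j)))) := by
              rw [U.map_comp, R.map_comp, Category.assoc]
      have haT : (adj.homEquiv X _).symm (v ≫ adj.unit.app (R.obj (U.obj (D.obj j))))
            ≫ U.map (R.map (U.map (c.ι.app j)))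
          = (adj.homEquiv X _).symm (v ≫ R.map (U.map (adj.unit.app (D.obj j))))
            ≫ U.map (R.map (U.map (c.ι.app j))) := by
        rw [← adj.homEquiv_naturality_right_symm, ← adj.homEquiv_naturality_right_symm, hαβ]
      obtain ⟨k, m, hm⟩ := pres_eq hκ hUX hJκ hUT _ _ haT
      have hm' : (v ≫ adj.unit.app (R.obj (U.obj (D.obj j))))
            ≫ R.map (U.map (R.map (U.map (D.map m))))
          = (v ≫ R.map (U.map (adj.unit.app (D.obj j))))
            ≫ R.map (U.map (R.map (U.map (D.map m)))) := by
        refine (adj.homEquiv X (U.obj (R.obj (U.obj (D.obj k))))).symm.injective ?_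
        rw [adj.homEquiv_naturality_right_symm, adj.homEquiv_naturality_right_symm]
        exact hm
      have hfork : (v ≫ R.map (U.map (D.map m))) ≫ adj.unit.app (R.obj (U.obj (D.obj k)))
          = (v ≫ R.map (U.map (D.map m))) ≫ R.map (U.map (adj.unit.app (D.obj k))) := by
        calc (v ≫ R.map (U.map (D.map m))) ≫ adj.unit.app (R.obj (U.obj (D.obj k)))
            = v ≫ (R.map (U.map (D.map m)) ≫ adj.unit.app (R.obj (U.obj (D.obj k)))) := by
              rw [Category.assoc]
          _ = v ≫ adj.unit.app (R.obj (U.obj (D.obj j)))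
              ≫ R.map (U.map (R.map (U.map (D.map m)))) := by
              rw [hnat (R.map (U.map (D.map m)))]
          _ = (v ≫ R.map (U.map (adj.unit.app (D.obj j))))
              ≫ R.map (U.map (R.map (U.map (D.map m)))) := by
              rw [← Category.assoc]; rw [hm']
          _ = v ≫ R.map (U.map (adj.unit.app (D.obj j) ≫ R.map (U.map (D.map m)))) := by
              rw [Category.assoc, ← R.map_comp, ← U.map_comp]
          _ = v ≫ R.map (U.map (D.map m ≫ adj.unit.app (D.obj k))) := by
              rw [← hnat (D.map m)]
          _ = (v ≫ R.map (U.map (D.map m))) ≫ R.map (U.map (adj.unit.app (D.obj k))) := by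
              rw [U.map_comp, R.map_comp, Category.assoc]
      obtain ⟨g, hg⟩ := Fork.IsLimit.lift' (hcodescent (D.obj k)).some
        (v ≫ R.map (U.map (D.map m))) hfork
      have hgι : g ≫ adj.unit.app (D.obj k) = v ≫ R.map (U.map (D.map m)) := by
        simpa using hg
      have hfinal : g ≫ c.ι.app k = f := by
        refine hmono c.pt _ _ ?_
        calc (g ≫ c.ι.app k) ≫ adj.unit.app c.pt
            = g ≫ adj.unit.app (D.obj k) ≫ R.map (U.map (c.ι.app k)) := by
              rw [Category.assoc, hnat (Y' := c.pt) (c.ι.app k)]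
          _ = (v ≫ R.map (U.map (D.map m))) ≫ R.map (U.map (c.ι.app k)) := by
              rw [← Category.assoc, hgι]
          _ = v ≫ R.map (U.map (D.map m ≫ c.ι.app k)) := by
              rw [Category.assoc, ← R.map_comp, ← U.map_comp]
          _ = v ≫ R.map (U.map (c.ι.app j)) := by rw [c.w m]
          _ = f ≫ adj.unit.app c.pt := hkey
      exact ⟨k, g, hfinal.symm⟩
    · -- injectivity
      intro i j p q hpq
      have hpq' : p ≫ c.ι.app i = q ≫ c.ι.app j := hpq
      have hUc : IsColimit (U.mapCocone c) := isColimitOfPreserves U hcolim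
      have hpq2 : (p ≫ D.map (IsFiltered.leftToMax i j)) ≫ c.ι.app (IsFiltered.max i j)
          = (q ≫ D.map (IsFiltered.rightToMax i j)) ≫ c.ι.app (IsFiltered.max i j) := by
        rw [Category.assoc, Category.assoc, c.w, c.w, hpq']
      have hpq3 : U.map (p ≫ D.map (IsFiltered.leftToMax i j))
            ≫ U.map (c.ι.app (IsFiltered.max i j))
          = U.map (q ≫ D.map (IsFiltered.rightToMax i j))
            ≫ U.map (c.ι.app (IsFiltered.max i j)) := by
        rw [← U.map_comp, ← U.map_comp, hpq2]
      obtain ⟨k, m, hm⟩ := pres_eq hκ hUX hJκ hUc _ _ hpq3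
      have hm' : U.map (p ≫ D.map (IsFiltered.leftToMax i j)) ≫ U.map (D.map m)
          = U.map (q ≫ D.map (IsFiltered.rightToMax i j)) ≫ U.map (D.map m) := hm
      have heq : (p ≫ D.map (IsFiltered.leftToMax i j)) ≫ D.map m
          = (q ≫ D.map (IsFiltered.rightToMax i j)) ≫ D.map m := by
        refine hmono (D.obj k) _ _ ?_
        rw [hnat, hnat, U.map_comp (p ≫ D.map (IsFiltered.leftToMax i j)) (D.map m),
          U.map_comp (q ≫ D.map (IsFiltered.rightToMax i j)) (D.map m), hm']
      refine ⟨k, IsFiltered.leftToMax i j ≫ m, IsFiltered.rightToMax i j ≫ m, ?_⟩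
      show p ≫ D.map (IsFiltered.leftToMax i j ≫ m) = q ≫ D.map (IsFiltered.rightToMax i j ≫ m)
      rw [D.map_comp, D.map_comp, ← Category.assoc, ← Category.assoc]
      exact heq
end

section
/- Over a field k, the family of coendomorphism coalgebras {coend(k^n) = (k^n)^* ⊗ k^n}_{n ≥ 1} forms a strong generator of the category of k-coalgebras: the induced family of hom-functors Coalg_k(coend(k^n), -) is jointly conservative, and moreover for every coalgebra C the canonical morphism from the coproduct of copies of coend(k^n) indexed by coalgebra morphisms coend(k^n) → C is a surjection onto C. -/
open TensorProduct

universe u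

/-- A right `C`-comodule structure on the `k`-module `M`. -/
def IsComoduleStruct {k M C : Type u} [CommRing k] [AddCommGroup M] [Module k M]
    [AddCommGroup C] [Module k C] [Coalgebra k C]
    (ρ : M →ₗ[k] M ⊗[k] C) : Prop :=
  (TensorProduct.rid k M).toLinearMap ∘ₗ
      LinearMap.lTensor M (Coalgebra.counit (R := k) (A := C)) ∘ₗ ρ = LinearMap.id ∧
  LinearMap.lTensor M (Coalgebra.comul (R := k) (A := C)) ∘ₗ ρ =
    (TensorProduct.assoc k M C C).toLinearMap ∘ₗ LinearMap.rTensor C ρ ∘ₗ ρ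

namespace CFSG

open LinearMap Coalgebra

section CommRingPart

variable {k : Type u} [CommRing k]
variable {X Y Z M N C D : Type u}
  [AddCommGroup X] [Module k X] [AddCommGroup Y] [Module k Y] [AddCommGroup Z] [Module k Z]
  [AddCommGroup M] [Module k M] [AddCommGroup N] [Module k N]
  [AddCommGroup C] [Module k C] [AddCommGroup D] [Module k D]

lemma rid_nat_apply (φ : X →ₗ[k] Y) (t : X ⊗[k] k) :
    TensorProduct.rid k Y (φ.rTensor k t) = φ (TensorProduct.rid k X t) := by
  have h : (TensorProduct.rid k Y).toLinearMap ∘ₗ φ.rTensor k =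
      φ ∘ₗ (TensorProduct.rid k X).toLinearMap :=
    TensorProduct.ext' fun x c => by simp
  simpa using LinearMap.congr_fun h t

lemma comm_apply (φ : X →ₗ[k] Y) (g : M →ₗ[k] N) (t : X ⊗[k] M) :
    g.lTensor Y (φ.rTensor M t) = φ.rTensor N (g.lTensor X t) := by
  have h : g.lTensor Y ∘ₗ φ.rTensor M = φ.rTensor N ∘ₗ g.lTensor X := by
    rw [LinearMap.lTensor_comp_rTensor, LinearMap.rTensor_comp_lTensor]
  simpa only [comp_apply] using LinearMap.congr_fun h t

lemma assoc_nat_apply (φ : X →ₗ[k] Y) (t : (X ⊗[k] M) ⊗[k] N) :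
    TensorProduct.assoc k Y M N ((φ.rTensor M).rTensor N t) =
      φ.rTensor (M ⊗[k] N) (TensorProduct.assoc k X M N t) := by
  have h : (TensorProduct.assoc k Y M N).toLinearMap ∘ₗ (φ.rTensor M).rTensor N =
      φ.rTensor (M ⊗[k] N) ∘ₗ (TensorProduct.assoc k X M N).toLinearMap :=
    TensorProduct.ext_threefold fun x m n => by simp
  simpa using LinearMap.congr_fun h t

variable [Coalgebra k C] [Coalgebra k D]

lemma struct_counit_apply {ρ : X →ₗ[k] X ⊗[k] C} (hρ : IsComoduleStruct ρ) (w : X) :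
    TensorProduct.rid k X ((counit (R := k) (A := C)).lTensor X (ρ w)) = w := by
  simpa using LinearMap.congr_fun hρ.1 w

lemma struct_coassoc_apply {ρ : X →ₗ[k] X ⊗[k] C} (hρ : IsComoduleStruct ρ) (w : X) :
    (comul (R := k) (A := C)).lTensor X (ρ w) =
      TensorProduct.assoc k X C C (ρ.rTensor C (ρ w)) := by
  simpa using LinearMap.congr_fun hρ.2 w

/-- Pushforward of a comodule structure along a coalgebra morphism. -/
lemma push_struct (g : C →ₗc[k] D) {ρ : X →ₗ[k] X ⊗[k] C} (hρ : IsComoduleStruct ρ) :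
    IsComoduleStruct (g.toLinearMap.lTensor X ∘ₗ ρ) := by
  constructor
  · refine LinearMap.ext fun w => ?_
    simp only [comp_apply, id_coe, id_eq, LinearEquiv.coe_coe]
    rw [← lTensor_comp_apply, g.counit_comp]
    exact struct_counit_apply hρ w
  · refine LinearMap.ext fun w => ?_
    simp only [comp_apply, LinearEquiv.coe_coe]
    rw [← lTensor_comp_apply, ← g.map_comp_comul, lTensor_comp_apply,
      struct_coassoc_apply hρ w]
    have key : ∀ t : (X ⊗[k] C) ⊗[k] C,
        (TensorProduct.map g.toLinearMap g.toLinearMap).lTensor X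
            (TensorProduct.assoc k X C C t) =
          TensorProduct.assoc k X D D
            ((g.toLinearMap.lTensor (X ⊗[k] D)) (((g.toLinearMap.lTensor X).rTensor C) t)) := by
      have h : (TensorProduct.map g.toLinearMap g.toLinearMap).lTensor X ∘ₗ
            (TensorProduct.assoc k X C C).toLinearMap =
          (TensorProduct.assoc k X D D).toLinearMap ∘ₗ (g.toLinearMap.lTensor (X ⊗[k] D)) ∘ₗ
            ((g.toLinearMap.lTensor X).rTensor C) :=
        TensorProduct.ext_threefold fun x c c' => by simp
      intro t; simpa only [comp_apply, LinearEquiv.coe_coe] using LinearMap.congr_fun h t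
    rw [key]
    congr 1
    rw [← rTensor_comp_apply, comm_apply]

/-- Transport of a comodule structure along a linear equivalence. -/
lemma transport_struct (φ : X ≃ₗ[k] Y) {ρ : X →ₗ[k] X ⊗[k] C} (hρ : IsComoduleStruct ρ) :
    IsComoduleStruct (φ.toLinearMap.rTensor C ∘ₗ ρ ∘ₗ φ.symm.toLinearMap) := by
  constructor
  · refine LinearMap.ext fun y => ?_
    simp only [comp_apply, id_coe, id_eq, LinearEquiv.coe_coe]
    rw [comm_apply, rid_nat_apply, struct_counit_apply hρ]
    simp
  · refine LinearMap.ext fun y => ?_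
    simp only [comp_apply, LinearEquiv.coe_coe]
    rw [comm_apply, struct_coassoc_apply hρ, ← assoc_nat_apply]
    congr 1
    rw [← rTensor_comp_apply, ← rTensor_comp_apply]
    have : (φ.toLinearMap.rTensor C) ∘ₗ ρ =
        ((φ.toLinearMap.rTensor C) ∘ₗ ρ ∘ₗ φ.symm.toLinearMap) ∘ₗ φ.toLinearMap := by
      refine LinearMap.ext fun x => ?_
      simp
    rw [← this]

/-- Direct sum (product) of two comodule structures. -/
lemma prod_struct {ρ : X →ₗ[k] X ⊗[k] C} {τ : Y →ₗ[k] Y ⊗[k] C}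
    (hρ : IsComoduleStruct ρ) (hτ : IsComoduleStruct τ) :
    IsComoduleStruct
      ((LinearMap.inl k X Y).rTensor C ∘ₗ ρ ∘ₗ LinearMap.fst k X Y +
        (LinearMap.inr k X Y).rTensor C ∘ₗ τ ∘ₗ LinearMap.snd k X Y) := by
  have hσinl : ((LinearMap.inl k X Y).rTensor C ∘ₗ ρ ∘ₗ LinearMap.fst k X Y +
        (LinearMap.inr k X Y).rTensor C ∘ₗ τ ∘ₗ LinearMap.snd k X Y) ∘ₗ LinearMap.inl k X Y =
      (LinearMap.inl k X Y).rTensor C ∘ₗ ρ := by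
    refine LinearMap.ext fun x => ?_
    simp
  have hσinr : ((LinearMap.inl k X Y).rTensor C ∘ₗ ρ ∘ₗ LinearMap.fst k X Y +
        (LinearMap.inr k X Y).rTensor C ∘ₗ τ ∘ₗ LinearMap.snd k X Y) ∘ₗ LinearMap.inr k X Y =
      (LinearMap.inr k X Y).rTensor C ∘ₗ τ := by
    refine LinearMap.ext fun yy => ?_
    simp
  constructor
  · refine LinearMap.ext fun p => ?_
    simp only [comp_apply, id_coe, id_eq, LinearEquiv.coe_coe, LinearMap.add_apply, map_add]
    rw [comm_apply, rid_nat_apply, struct_counit_apply hρ,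
      comm_apply, rid_nat_apply, struct_counit_apply hτ]
    simp
  · refine LinearMap.ext fun p => ?_
    simp only [comp_apply, LinearEquiv.coe_coe, LinearMap.add_apply, map_add]
    refine congrArg₂ (· + ·) ?_ ?_
    · rw [comm_apply, struct_coassoc_apply hρ, ← assoc_nat_apply]
      congr 1
      rw [← rTensor_comp_apply, ← rTensor_comp_apply]
      exact congrFun (congrArg _ (congrArg _ hσinl.symm)) _
    · rw [comm_apply, struct_coassoc_apply hτ, ← assoc_nat_apply]
      congr 1
      rw [← rTensor_comp_apply, ← rTensor_comp_apply]
      exact congrFun (congrArg _ (congrArg _ hσinr.symm)) _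


/-- A map into `C` whose composite with comultiplication factors through itself gives a
comodule structure. -/
lemma corestrict_struct {uh : X →ₗ[k] C} (hinj : Function.Injective uh)
    (hinj2 : Function.Injective (uh.rTensor (C ⊗[k] C)))
    {δ : X →ₗ[k] X ⊗[k] C} (hc : uh.rTensor C ∘ₗ δ = comul ∘ₗ uh) :
    IsComoduleStruct δ := by
  have hc' : ∀ w, uh.rTensor C (δ w) = comul (uh w) := fun w => LinearMap.congr_fun hc w
  constructor
  · refine LinearMap.ext fun w => ?_
    apply hinj
    simp only [comp_apply, id_coe, id_eq, LinearEquiv.coe_coe]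
    rw [← rid_nat_apply uh, ← comm_apply, hc', lTensor_counit_comul]
    simp
  · refine LinearMap.ext fun w => ?_
    apply hinj2
    simp only [comp_apply, LinearEquiv.coe_coe]
    rw [← comm_apply, hc', ← Coalgebra.coassoc_apply, ← hc', ← rTensor_comp_apply, ← hc,
      rTensor_comp, comp_apply, assoc_nat_apply]

/-- Quotient comodule structure. -/
lemma quot_struct {ρ : X →ₗ[k] X ⊗[k] C} (hρ : IsComoduleStruct ρ) (K : Submodule k X)
    (hsub : ∀ w ∈ K, ρ w ∈ LinearMap.range (K.subtype.rTensor C)) :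
    ∃ ρb : (X ⧸ K) →ₗ[k] (X ⧸ K) ⊗[k] C,
      ρb ∘ₗ K.mkQ = K.mkQ.rTensor C ∘ₗ ρ ∧ IsComoduleStruct ρb := by
  have hzero : K.mkQ ∘ₗ K.subtype = 0 := by
    refine LinearMap.ext fun w => ?_
    simp
  have hker : K ≤ LinearMap.ker (K.mkQ.rTensor C ∘ₗ ρ) := by
    intro w hw
    obtain ⟨s, hs⟩ := hsub w hw
    simp only [LinearMap.mem_ker, comp_apply]
    rw [← hs, ← rTensor_comp_apply, hzero, rTensor_zero, LinearMap.zero_apply]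
  refine ⟨K.liftQ _ hker, K.liftQ_mkQ (rTensor C K.mkQ ∘ₗ ρ) hker, ?_, ?_⟩
  · apply Submodule.linearMap_qext
    refine LinearMap.ext fun w => ?_
    simp only [comp_apply, id_coe, id_eq, LinearEquiv.coe_coe, Submodule.mkQ_apply,
      Submodule.liftQ_apply]
    rw [comm_apply, rid_nat_apply, struct_counit_apply hρ]
    rfl
  · apply Submodule.linearMap_qext
    refine LinearMap.ext fun w => ?_
    simp only [comp_apply, LinearEquiv.coe_coe, Submodule.mkQ_apply, Submodule.liftQ_apply]
    rw [comm_apply, struct_coassoc_apply hρ, ← assoc_nat_apply, ← rTensor_comp_apply]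
    congr 1
    rw [← rTensor_comp_apply]
    congr 2

lemma exists_corestrict {W : Type u} [AddCommGroup W] [Module k W] (φ : W →ₗ[k] Y)
    (hφ : Function.Injective φ) (ψ : X →ₗ[k] Y) (h : ∀ x, ψ x ∈ LinearMap.range φ) :
    ∃ δ : X →ₗ[k] W, φ ∘ₗ δ = ψ := by
  refine ⟨(LinearEquiv.ofInjective φ hφ).symm.toLinearMap ∘ₗ ψ.codRestrict (range φ) h, ?_⟩
  refine LinearMap.ext fun x => ?_
  simp only [comp_apply, LinearEquiv.coe_coe, LinearMap.codRestrict_apply]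
  have h1 : φ ((LinearEquiv.ofInjective φ hφ).symm (ψ.codRestrict (range φ) h x)) =
      ((LinearEquiv.ofInjective φ hφ) ((LinearEquiv.ofInjective φ hφ).symm
        (ψ.codRestrict (range φ) h x)) : LinearMap.range φ) := rfl
  rw [h1, LinearEquiv.apply_symm_apply]
  rfl

end CommRingPart

section FieldPart

variable {k : Type u} [Field k]
variable {M N C : Type u}
  [AddCommGroup M] [Module k M] [AddCommGroup N] [Module k N]
  [AddCommGroup C] [Module k C]

lemma rTensor_inj (φ : M →ₗ[k] N) (hφ : Function.Injective φ) (P : Type u)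
    [AddCommGroup P] [Module k P] : Function.Injective (φ.rTensor P) :=
  Module.Flat.rTensor_preserves_injective_linearMap φ hφ

lemma mem_range_of_rTensor_eq_zero (φ : M →ₗ[k] N) {P : Type u} [AddCommGroup P] [Module k P]
    {t : M ⊗[k] P} (ht : φ.rTensor P t = 0) :
    t ∈ LinearMap.range ((LinearMap.ker φ).subtype.rTensor P) := by
  have hex := Module.Flat.rTensor_exact P (LinearMap.exact_subtype_ker_map φ)
  obtain ⟨s, hs⟩ := (hex t).mp ht
  exact ⟨s, hs⟩

variable [Coalgebra k C]

lemma exists_repr (t : C ⊗[k] C) :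
    ∃ F : (Module.Basis.ofVectorSpaceIndex k C) →₀ C,
      t = F.sum fun i c => c ⊗ₜ[k] ((Module.Basis.ofVectorSpace k C) i) := by
  set ℬ := Module.Basis.ofVectorSpace k C with hB
  induction t using TensorProduct.induction_on with
  | zero => exact ⟨0, by simp⟩
  | tmul a b =>
    refine ⟨(ℬ.repr b).mapRange (fun c => c • a) (by simp), ?_⟩
    rw [Finsupp.sum_mapRange_index (by simp)]
    have : ((ℬ.repr b).sum fun i c => (c • a) ⊗ₜ[k] ℬ i)
        = (ℬ.repr b).sum fun i c => (TensorProduct.mk k C C a) (c • ℬ i) := by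
      apply Finsupp.sum_congr
      intro i _
      simp [TensorProduct.smul_tmul, TensorProduct.tmul_smul]
    rw [this, ← map_finsuppSum, ← Finsupp.linearCombination_apply,
      ℬ.linearCombination_repr]
    rfl
  | add t₁ t₂ h₁ h₂ =>
    obtain ⟨F₁, hF₁⟩ := h₁
    obtain ⟨F₂, hF₂⟩ := h₂
    refine ⟨F₁ + F₂, ?_⟩
    rw [hF₁, hF₂]
    exact (Finsupp.sum_add_index' (fun i => TensorProduct.zero_tmul (R := k) C (ℬ i))
      (fun i b₁ b₂ => TensorProduct.add_tmul b₁ b₂ (ℬ i))).symm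

lemma exists_coideal (x : C) :
    ∃ V : Submodule k C, FiniteDimensional k V ∧ x ∈ V ∧
      ∀ v ∈ V, comul (R := k) v ∈ LinearMap.range (V.subtype.rTensor C) := by
  classical
  set ℬ := Module.Basis.ofVectorSpace k C with hB
  obtain ⟨F, hF⟩ := exists_repr (comul (R := k) x)
  set S : Set C := insert x ↑(F.support.image F) with hS
  refine ⟨Submodule.span k S, FiniteDimensional.span_of_finite k
    (Set.Finite.insert x (F.support.image F).finite_toSet), Submodule.subset_span
    (Set.mem_insert x _), ?_⟩
  set V := Submodule.span k S with hV
  set R := LinearMap.range (V.subtype.rTensor C) with hR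
  have hFV : ∀ i ∈ F.support, F i ∈ V := fun i hi =>
    Submodule.subset_span (Set.mem_insert_iff.mpr (Or.inr (Finset.mem_image_of_mem F hi)))
  have hsum : ∀ (G : (Module.Basis.ofVectorSpaceIndex k C) →₀ C) (ψ : (Module.Basis.ofVectorSpaceIndex k C) → C),
      (∀ i ∈ G.support, G i ∈ V) → (G.sum fun i c => c ⊗ₜ[k] ψ i) ∈ R := by
    intro G ψ hG
    apply Submodule.sum_mem
    intro i hi
    exact ⟨(⟨G i, hG i hi⟩ : V) ⊗ₜ[k] ψ i, rfl⟩
  have hcomap : ∀ v ∈ S, comul (R := k) v ∈ R := by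
    intro v hv
    rcases Set.mem_insert_iff.mp hv with h | h
    · rw [h, hF]
      exact hsum F (fun i => ℬ i) hFV
    · obtain ⟨j, hj, hFj⟩ := Finset.mem_image.mp (by exact_mod_cast h)
      subst hFj
      -- extraction of `comul (F j)` via coassociativity
      set Φ : C ⊗[k] C →ₗ[k] C :=
        (TensorProduct.rid k C).toLinearMap ∘ₗ (ℬ.coord j).lTensor C with hΦ
      have E1 : ∀ (s : C ⊗[k] C) (b : C),
          Φ.lTensor C ((TensorProduct.assoc k C C C) (s ⊗ₜ[k] b)) = (ℬ.coord j) b • s := by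
        intro s b
        induction s using TensorProduct.induction_on with
        | zero => simp
        | tmul a c => simp [hΦ, TensorProduct.smul_tmul, TensorProduct.tmul_smul]
        | add s₁ s₂ hs₁ hs₂ =>
          rw [TensorProduct.add_tmul, map_add, map_add, hs₁, hs₂, smul_add]
      have way2 : Φ.lTensor C ((TensorProduct.assoc k C C C)
          ((comul (R := k)).rTensor C (comul (R := k) x))) = comul (R := k) (F j) := by
        rw [hF, Finsupp.sum, map_sum, map_sum, map_sum]
        rw [Finset.sum_congr rfl (fun i _ => by
          rw [rTensor_tmul, E1 (comul (R := k) (F i)) (ℬ i)])]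
        rw [Finset.sum_eq_single j (fun i _ hij => by
            rw [Module.Basis.coord_apply, Module.Basis.repr_self, Finsupp.single_apply, if_neg hij,
              zero_smul])
          (fun hj' => absurd hj hj')]
        rw [Module.Basis.coord_apply, Module.Basis.repr_self, Finsupp.single_apply, if_pos rfl, one_smul]
      have way1 : Φ.lTensor C ((TensorProduct.assoc k C C C)
          ((comul (R := k)).rTensor C (comul (R := k) x))) ∈ R := by
        rw [Coalgebra.coassoc_apply, ← lTensor_comp_apply, hF, map_finsuppSum]
        have heq : (F.sum fun i c => (Φ ∘ₗ comul (R := k)).lTensor C (c ⊗ₜ[k] ℬ i))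
            = F.sum fun i c => c ⊗ₜ[k] ((Φ ∘ₗ comul (R := k)) (ℬ i)) :=
          Finsupp.sum_congr fun i _ => lTensor_tmul _ _ _ _
        rw [heq]
        exact hsum F (fun i => (Φ ∘ₗ comul (R := k)) (ℬ i)) hFV
      rw [← way2]
      exact way1
  intro v hv
  have : V ≤ Submodule.comap (comul (R := k) (A := C)) R := by
    rw [hV]
    rw [Submodule.span_le]
    intro s hs
    exact hcomap s hs
  exact this hv

end FieldPart


/-- Every element of a coalgebra over a field lies in the image of an injective linear map
from some `k^n` which carries a canonical comodule structure compatible with comultiplication. -/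
lemma main_package {k : Type u} [Field k] {C : Type u} [AddCommGroup C] [Module k C]
    [Coalgebra k C] (x : C) :
    ∃ (n : ℕ) (uh : (Fin n → k) →ₗ[k] C) (δ : (Fin n → k) →ₗ[k] (Fin n → k) ⊗[k] C)
      (w₀ : Fin n → k),
      Function.Injective uh ∧ uh w₀ = x ∧ (uh.rTensor C ∘ₗ δ = comul ∘ₗ uh) ∧
        IsComoduleStruct δ := by
  obtain ⟨V, hfd, hxV, hco⟩ := exists_coideal (k := k) x
  set n := Module.finrank k V with hn
  set u : (Fin n → k) ≃ₗ[k] V := (Module.finBasis k V).equivFun.symm with hu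
  set uh : (Fin n → k) →ₗ[k] C := V.subtype ∘ₗ u.toLinearMap with huh
  have hinj : Function.Injective uh := V.injective_subtype.comp u.injective
  have huu : u.toLinearMap ∘ₗ u.symm.toLinearMap = LinearMap.id := by
    refine LinearMap.ext fun w => ?_
    simp
  have hmem : ∀ w, comul (R := k) (uh w) ∈ LinearMap.range (uh.rTensor C) := by
    intro w
    obtain ⟨s, hs⟩ := hco (uh w) (by exact (u w).2)
    refine ⟨u.symm.toLinearMap.rTensor C s, ?_⟩
    have hcollapse : (u.toLinearMap.rTensor C) ((u.symm.toLinearMap.rTensor C) s) = s := by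
      rw [← rTensor_comp_apply, huu, rTensor_id, id_apply]
    have h2 : uh.rTensor C = V.subtype.rTensor C ∘ₗ u.toLinearMap.rTensor C := by
      rw [huh, rTensor_comp]
    rw [h2, comp_apply, hcollapse, hs]
  obtain ⟨δ, hδc⟩ := exists_corestrict (uh.rTensor C) (rTensor_inj uh hinj C)
    (comul (R := k) ∘ₗ uh) (fun w => by simpa using hmem w)
  exact ⟨n, uh, δ, u.symm ⟨x, hxV⟩, hinj, by simp [huh], hδc,
    corestrict_struct hinj (rTensor_inj uh hinj (C ⊗[k] C)) hδc⟩

end CFSG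

set_option maxHeartbeats 1000000 in
/-- Over a field `k`, the family of coendomorphism coalgebras
`coend(k^n) = (k^n)^* ⊗ k^n` — characterized by the property that `C`-comodule
structures on `k^n` correspond naturally to coalgebra morphisms `coend(k^n) → C` —
forms a strong generator of the category of `k`-coalgebras: the hom-functors out of
them are jointly conservative, and for every coalgebra `C` the canonical morphism from
the coproduct of copies of the `coend(k^n)` indexed by all coalgebra morphisms
`coend(k^n) → C` onto `C` is surjective. -/
theorem coend_family_strong_generator
    {k : Type u} [Field k]
    (E : ℕ → Type u) [∀ n, AddCommGroup (E n)] [∀ n, Module k (E n)]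
    [∀ n, Coalgebra k (E n)]
    (e : ∀ (n : ℕ) (C : Type u) [AddCommGroup C] [Module k C] [Coalgebra k C],
      {ρ : (Fin n → k) →ₗ[k] (Fin n → k) ⊗[k] C // IsComoduleStruct ρ} ≃
        (E n →ₗc[k] C))
    (hnat : ∀ (n : ℕ) (C C' : Type u) [AddCommGroup C] [Module k C] [Coalgebra k C]
      [AddCommGroup C'] [Module k C'] [Coalgebra k C'] (g : C →ₗc[k] C')
      (ρ : {ρ : (Fin n → k) →ₗ[k] (Fin n → k) ⊗[k] C // IsComoduleStruct ρ})
      (h : IsComoduleStruct (LinearMap.lTensor (Fin n → k) g.toLinearMap ∘ₗ ρ.1)),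
      e n C' ⟨LinearMap.lTensor (Fin n → k) g.toLinearMap ∘ₗ ρ.1, h⟩ =
        g.comp (e n C ρ)) :
    (∀ (C D : Type u) [AddCommGroup C] [Module k C] [Coalgebra k C]
      [AddCommGroup D] [Module k D] [Coalgebra k D] (f : C →ₗc[k] D),
      (∀ n : ℕ, Function.Bijective (fun g : E n →ₗc[k] C => f.comp g)) →
        Function.Bijective f) ∧
    (∀ (C : Type u) [AddCommGroup C] [Module k C] [Coalgebra k C] (x : C),
      ∃ (n : ℕ) (g : E n →ₗc[k] C) (y : E n), g y = x) := by
  classical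
  open LinearMap Coalgebra in
  -- Part 2 : every element is in the image of some coalgebra morphism from `E n`.
  have part2 : ∀ (C : Type u) [AddCommGroup C] [Module k C] [Coalgebra k C] (x : C),
      ∃ (n : ℕ) (g : E n →ₗc[k] C) (y : E n), g y = x := by
    intro C _ _ _ x
    obtain ⟨n, uh, δ, w₀, hinj, hw₀, hc, hδ⟩ := CFSG.main_package (k := k) x
    set g : E n →ₗc[k] C := e n C ⟨δ, hδ⟩ with hg
    set ρ₀ := (e n (E n)).symm (CoalgHom.id k (E n)) with hρ₀
    have hpush : IsComoduleStruct (g.toLinearMap.lTensor (Fin n → k) ∘ₗ ρ₀.1) :=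
      CFSG.push_struct g ρ₀.2
    have hnn := hnat n (E n) C g ρ₀ hpush
    have h3 : e n (E n) ρ₀ = CoalgHom.id k (E n) := Equiv.apply_symm_apply _ _
    rw [h3, CoalgHom.comp_id] at hnn
    have heq : g.toLinearMap.lTensor (Fin n → k) ∘ₗ ρ₀.1 = δ :=
      congrArg Subtype.val ((e n C).injective (hnn.trans hg))
    refine ⟨n, g, (TensorProduct.lid k (E n))
      ((((counit (R := k) (A := C)) ∘ₗ uh).rTensor (E n)) (ρ₀.1 w₀)), ?_⟩
    have hnatlid : ∀ t : (Fin n → k) ⊗[k] (E n),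
        g ((TensorProduct.lid k (E n)) ((((counit (R := k) (A := C)) ∘ₗ uh).rTensor (E n)) t)) =
          (TensorProduct.lid k C) ((((counit (R := k) (A := C)) ∘ₗ uh).rTensor C)
            (g.toLinearMap.lTensor (Fin n → k) t)) := by
      intro t
      induction t using TensorProduct.induction_on with
      | zero => simp
      | tmul w a => simp
      | add t₁ t₂ h₁ h₂ => simp only [map_add, h₁, h₂]
    have heq' := LinearMap.congr_fun heq w₀
    simp only [comp_apply] at heq'
    rw [hnatlid, heq']
    have h1 : (((counit (R := k) (A := C)) ∘ₗ uh).rTensor C) (δ w₀) =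
        (counit (R := k) (A := C)).rTensor C ((uh.rTensor C) (δ w₀)) := by
      rw [rTensor_comp, comp_apply]
    have hc' := LinearMap.congr_fun hc w₀
    simp only [comp_apply] at hc'
    rw [h1, hc', Coalgebra.rTensor_counit_comul, hw₀]
    simp
  refine ⟨?_, part2⟩
  intro C D _ _ _ _ _ _ f hf
  constructor
  · -- injectivity
    have hker : ∀ x : C, f x = 0 → x = 0 := by
      intro x hx0
      obtain ⟨n, uh, δ, w₀, hinj, hw₀, hc, hδ⟩ := CFSG.main_package (k := k) x
      set ρ'' : (Fin n → k) →ₗ[k] (Fin n → k) ⊗[k] D :=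
        f.toLinearMap.lTensor (Fin n → k) ∘ₗ δ with hρ''
      have hρ''s : IsComoduleStruct ρ'' := CFSG.push_struct f hδ
      set K := LinearMap.ker (f.toLinearMap ∘ₗ uh) with hK
      have hw₀K : w₀ ∈ K := by
        simp only [hK, LinearMap.mem_ker, comp_apply, hw₀]
        exact hx0
      have hsub : ∀ w ∈ K, ρ'' w ∈ LinearMap.range (K.subtype.rTensor D) := by
        intro w hw
        apply CFSG.mem_range_of_rTensor_eq_zero (f.toLinearMap ∘ₗ uh)
        have e1 : (f.toLinearMap ∘ₗ uh).rTensor D (ρ'' w)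
            = f.toLinearMap.lTensor D (((f.toLinearMap ∘ₗ uh).rTensor C) (δ w)) := by
          rw [hρ'', comp_apply]
          exact (CFSG.comm_apply (f.toLinearMap ∘ₗ uh) f.toLinearMap (δ w)).symm
        have e2 : ((f.toLinearMap ∘ₗ uh).rTensor C) (δ w)
            = f.toLinearMap.rTensor C (comul (R := k) (uh w)) := by
          rw [rTensor_comp, comp_apply]
          congr 1
          simpa only [comp_apply] using LinearMap.congr_fun hc w
        have e3 : f (uh w) = 0 := by
          have h' : f.toLinearMap (uh w) = 0 := by
            simpa only [hK, LinearMap.mem_ker, comp_apply] using hw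
          exact h'
        rw [e1, e2, ← comp_apply (f.toLinearMap.lTensor D), lTensor_comp_rTensor]
        have e4 := LinearMap.congr_fun f.map_comp_comul (uh w)
        simp only [comp_apply] at e4
        rw [e4, show f.toLinearMap (uh w) = 0 from e3, map_zero]
      obtain ⟨ρb, hρbc, hρbs⟩ := CFSG.quot_struct hρ''s K hsub
      set m := Module.finrank k ((Fin n → k) ⧸ K) with hm
      set v : (Fin m → k) ≃ₗ[k] ((Fin n → k) ⧸ K) :=
        (Module.finBasis k ((Fin n → k) ⧸ K)).equivFun.symm with hv
      set ρbv : (Fin m → k) →ₗ[k] (Fin m → k) ⊗[k] D :=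
        v.symm.toLinearMap.rTensor D ∘ₗ ρb ∘ₗ v.toLinearMap with hρbv
      have hρbvs : IsComoduleStruct ρbv := by
        have := CFSG.transport_struct v.symm hρbs
        rwa [LinearEquiv.symm_symm] at this
      obtain ⟨t, ht⟩ := (hf m).2 (e m D ⟨ρbv, hρbvs⟩)
      have ht' : f.comp t = e m D ⟨ρbv, hρbvs⟩ := ht
      set τv := (e m C).symm t with hτv0
      have hτpush : IsComoduleStruct (f.toLinearMap.lTensor (Fin m → k) ∘ₗ τv.1) :=
        CFSG.push_struct f τv.2
      have hτnn := hnat m C D f τv hτpush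
      rw [show e m C τv = t from Equiv.apply_symm_apply _ _, ht'] at hτnn
      have hτv : f.toLinearMap.lTensor (Fin m → k) ∘ₗ τv.1 = ρbv :=
        congrArg Subtype.val ((e m D).injective hτnn)
      set ph : (Fin n → k) →ₗ[k] (Fin m → k) := v.symm.toLinearMap ∘ₗ K.mkQ with hph
      have key1 : ∀ w, ρbv (ph w) = ph.rTensor D (ρ'' w) := by
        intro w
        simp only [hρbv, hph, comp_apply]
        rw [show v.toLinearMap (v.symm.toLinearMap (K.mkQ w)) = K.mkQ w by simp]
        rw [show ρb (K.mkQ w) = (K.mkQ.rTensor D) (ρ'' w) from by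
          simpa only [comp_apply] using LinearMap.congr_fun hρbc w]
        rw [← rTensor_comp_apply]
      set σA : ((Fin n → k) × (Fin m → k)) →ₗ[k] (((Fin n → k) × (Fin m → k)) ⊗[k] C) :=
        (LinearMap.inl k (Fin n → k) (Fin m → k)).rTensor C ∘ₗ δ ∘ₗ
            LinearMap.fst k (Fin n → k) (Fin m → k) +
          (LinearMap.inr k (Fin n → k) (Fin m → k)).rTensor C ∘ₗ τv.1 ∘ₗ
            LinearMap.snd k (Fin n → k) (Fin m → k) with hσA
      have hσAs : IsComoduleStruct σA := CFSG.prod_struct hδ τv.2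
      set Nmap : ((Fin n → k) × (Fin m → k)) →ₗ[k] ((Fin n → k) × (Fin m → k)) :=
        LinearMap.inr k (Fin n → k) (Fin m → k) ∘ₗ ph ∘ₗ
          LinearMap.fst k (Fin n → k) (Fin m → k) with hNm
      set S : ((Fin n → k) × (Fin m → k)) ≃ₗ[k] ((Fin n → k) × (Fin m → k)) :=
        LinearEquiv.ofLinear (LinearMap.id + Nmap) (LinearMap.id - Nmap)
          (by refine LinearMap.ext fun p => ?_; simp [hNm])
          (by refine LinearMap.ext fun p => ?_; simp [hNm]) with hS
      have hSapp : ∀ p : ((Fin n → k) × (Fin m → k)),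
          S.toLinearMap p = (p.1, p.2 + ph p.1) := by
        intro p
        simp only [hS, LinearEquiv.ofLinear_toLinearMap, LinearMap.add_apply, id_coe, id_eq, hNm,
          comp_apply, LinearMap.fst_apply, LinearMap.inr_apply]
        rw [Prod.ext_iff]
        constructor <;> simp
      have hs1 : S.symm.toLinearMap ∘ₗ LinearMap.inl k (Fin n → k) (Fin m → k) =
          LinearMap.inl k (Fin n → k) (Fin m → k) -
            LinearMap.inr k (Fin n → k) (Fin m → k) ∘ₗ ph := by
        refine LinearMap.ext fun a => ?_
        simp [hS, hNm, Prod.ext_iff]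
      have hs2 : S.symm.toLinearMap ∘ₗ LinearMap.inr k (Fin n → k) (Fin m → k) =
          LinearMap.inr k (Fin n → k) (Fin m → k) := by
        refine LinearMap.ext fun b => ?_
        simp [hS, hNm]
      set σB : ((Fin n → k) × (Fin m → k)) →ₗ[k] (((Fin n → k) × (Fin m → k)) ⊗[k] C) :=
        S.symm.toLinearMap.rTensor C ∘ₗ σA ∘ₗ S.toLinearMap with hσB
      have hσBs : IsComoduleStruct σB := by
        have := CFSG.transport_struct S.symm hσAs
        rwa [LinearEquiv.symm_symm] at this
      set σ1 : ((Fin n → k) × (Fin m → k)) →ₗ[k] (((Fin n → k) × (Fin m → k)) ⊗[k] D) :=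
        (LinearMap.inl k (Fin n → k) (Fin m → k)).rTensor D ∘ₗ ρ'' ∘ₗ
            LinearMap.fst k (Fin n → k) (Fin m → k) +
          (LinearMap.inr k (Fin n → k) (Fin m → k)).rTensor D ∘ₗ ρbv ∘ₗ
            LinearMap.snd k (Fin n → k) (Fin m → k) with hσ1
      have hpushA : ∀ p, f.toLinearMap.lTensor ((Fin n → k) × (Fin m → k)) (σA p) = σ1 p := by
        intro p
        simp only [hσA, hσ1, LinearMap.add_apply, comp_apply, map_add]
        rw [CFSG.comm_apply, CFSG.comm_apply]
        rw [show f.toLinearMap.lTensor (Fin n → k)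
            (δ ((LinearMap.fst k (Fin n → k) (Fin m → k)) p)) =
          ρ'' ((LinearMap.fst k (Fin n → k) (Fin m → k)) p) from rfl]
        rw [show f.toLinearMap.lTensor (Fin m → k)
            (τv.1 ((LinearMap.snd k (Fin n → k) (Fin m → k)) p)) =
          ρbv ((LinearMap.snd k (Fin n → k) (Fin m → k)) p) from by
          simpa only [comp_apply] using LinearMap.congr_fun hτv
            ((LinearMap.snd k (Fin n → k) (Fin m → k)) p)]
      have hfix : ∀ p, S.symm.toLinearMap.rTensor D (σ1 (S.toLinearMap p)) = σ1 p := by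
        intro p
        have hval : σ1 (S.toLinearMap p) =
            (LinearMap.inl k (Fin n → k) (Fin m → k)).rTensor D (ρ'' p.1) +
              ((LinearMap.inr k (Fin n → k) (Fin m → k)).rTensor D (ρbv p.2) +
                (LinearMap.inr k (Fin n → k) (Fin m → k)).rTensor D (ρbv (ph p.1))) := by
          rw [hSapp]
          simp only [hσ1, LinearMap.add_apply, comp_apply, LinearMap.fst_apply, LinearMap.snd_apply,
            map_add]
        rw [hval]
        simp only [map_add]
        rw [← rTensor_comp_apply, ← rTensor_comp_apply, ← rTensor_comp_apply, hs1, hs2,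
          rTensor_sub, LinearMap.sub_apply, rTensor_comp, comp_apply, key1]
        have hgoal : σ1 p = (LinearMap.inl k (Fin n → k) (Fin m → k)).rTensor D (ρ'' p.1) +
            (LinearMap.inr k (Fin n → k) (Fin m → k)).rTensor D (ρbv p.2) := by
          simp only [hσ1, LinearMap.add_apply, comp_apply, LinearMap.fst_apply, LinearMap.snd_apply]
        rw [hgoal]
        simp only [comp_apply]
        rw [show (lTensor (Fin n → k) f.toLinearMap) (δ p.1) = ρ'' p.1 from rfl]
        abel
      have hpushB : ∀ p, f.toLinearMap.lTensor ((Fin n → k) × (Fin m → k)) (σB p) = σ1 p := by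
        intro p
        simp only [hσB, comp_apply]
        rw [CFSG.comm_apply, hpushA, hfix]
      set wE : ((Fin n → k) × (Fin m → k)) ≃ₗ[k] (Fin (n + m) → k) :=
        ((LinearEquiv.funCongrLeft k k finSumFinEquiv).trans
          (LinearEquiv.sumArrowLequivProdArrow (Fin n) (Fin m) k k)).symm with hwE
      have hσtAs : IsComoduleStruct (wE.toLinearMap.rTensor C ∘ₗ σA ∘ₗ wE.symm.toLinearMap) :=
        CFSG.transport_struct wE hσAs
      have hσtBs : IsComoduleStruct (wE.toLinearMap.rTensor C ∘ₗ σB ∘ₗ wE.symm.toLinearMap) :=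
        CFSG.transport_struct wE hσBs
      have hpusht : f.toLinearMap.lTensor (Fin (n + m) → k) ∘ₗ
            (wE.toLinearMap.rTensor C ∘ₗ σA ∘ₗ wE.symm.toLinearMap) =
          f.toLinearMap.lTensor (Fin (n + m) → k) ∘ₗ
            (wE.toLinearMap.rTensor C ∘ₗ σB ∘ₗ wE.symm.toLinearMap) := by
        refine LinearMap.ext fun z => ?_
        simp only [comp_apply]
        rw [CFSG.comm_apply, CFSG.comm_apply, hpushA, hpushB]
      have hBA : (⟨wE.toLinearMap.rTensor C ∘ₗ σA ∘ₗ wE.symm.toLinearMap, hσtAs⟩ :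
          {ρ : (Fin (n + m) → k) →ₗ[k] (Fin (n + m) → k) ⊗[k] C // IsComoduleStruct ρ}) =
          ⟨wE.toLinearMap.rTensor C ∘ₗ σB ∘ₗ wE.symm.toLinearMap, hσtBs⟩ := by
        apply (e (n + m) C).injective
        apply (hf (n + m)).1
        show f.comp _ = f.comp _
        rw [← hnat (n + m) C D f ⟨_, hσtAs⟩ (CFSG.push_struct f hσtAs),
          ← hnat (n + m) C D f ⟨_, hσtBs⟩ (CFSG.push_struct f hσtBs)]
        congr 1
        exact Subtype.ext hpusht
      have hABval : wE.toLinearMap.rTensor C ∘ₗ σA ∘ₗ wE.symm.toLinearMap =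
          wE.toLinearMap.rTensor C ∘ₗ σB ∘ₗ wE.symm.toLinearMap :=
        congrArg Subtype.val hBA
      have hpt : σA (w₀, 0) = σB (w₀, 0) := by
        have h5 := LinearMap.congr_fun hABval (wE (w₀, 0))
        simp only [comp_apply, LinearEquiv.coe_coe, LinearEquiv.symm_apply_apply] at h5
        exact CFSG.rTensor_inj wE.toLinearMap wE.injective C h5
      have hphw₀ : ph w₀ = 0 := by
        have : K.mkQ w₀ = 0 := by
          rw [Submodule.mkQ_apply]
          exact (Submodule.Quotient.mk_eq_zero _).mpr hw₀K
        simp [hph, this]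
      have hA0 : σA (w₀, (0 : Fin m → k)) =
          (LinearMap.inl k (Fin n → k) (Fin m → k)).rTensor C (δ w₀) := by
        simp [hσA]
      have hB0 : σB (w₀, (0 : Fin m → k)) =
          (LinearMap.inl k (Fin n → k) (Fin m → k)).rTensor C (δ w₀) -
            ((LinearMap.inr k (Fin n → k) (Fin m → k)) ∘ₗ ph).rTensor C (δ w₀) := by
        have hS0 : S.toLinearMap (w₀, (0 : Fin m → k)) = (w₀, 0) := by
          rw [hSapp, hphw₀, add_zero]
        simp only [hσB, comp_apply, hS0, hA0]
        rw [← rTensor_comp_apply, hs1, rTensor_sub, LinearMap.sub_apply]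
      have h6 : ((LinearMap.inr k (Fin n → k) (Fin m → k)) ∘ₗ ph).rTensor C (δ w₀) = 0 := by
        rw [hA0, hB0] at hpt
        exact sub_eq_self.mp hpt.symm
      have h7 : ph.rTensor C (δ w₀) = 0 := by
        apply CFSG.rTensor_inj (LinearMap.inr k (Fin n → k) (Fin m → k))
          LinearMap.inr_injective C
        rw [map_zero, ← rTensor_comp_apply]
        exact h6
      obtain ⟨s, hs⟩ := CFSG.mem_range_of_rTensor_eq_zero ph h7
      have hzero : ((counit (R := k) (A := C)) ∘ₗ uh) ∘ₗ (LinearMap.ker ph).subtype = 0 := by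
        refine LinearMap.ext fun wk => ?_
        have hwk : ph wk.1 = 0 := wk.2
        have hmk : K.mkQ wk.1 = 0 := by
          apply v.symm.injective
          rw [map_zero]
          simpa only [hph, comp_apply, LinearEquiv.coe_coe] using hwk
        have hwkK : (wk : Fin n → k) ∈ K := by
          rwa [Submodule.mkQ_apply, Submodule.Quotient.mk_eq_zero] at hmk
        have hfw : f (uh wk.1) = 0 := by
          have h' : f.toLinearMap (uh wk.1) = 0 := by
            simpa only [hK, LinearMap.mem_ker, comp_apply] using hwkK
          exact h'
        have : counit (R := k) (uh wk.1) = counit (R := k) (f (uh wk.1)) :=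
          (CoalgHomClass.counit_comp_apply f _).symm
        simp only [comp_apply, LinearMap.zero_apply, Submodule.coe_subtype]
        rw [this, hfw, map_zero]
      have hfinal : (1 : k) ⊗ₜ[k] x = (0 : k ⊗[k] C) := by
        rw [← hw₀, ← Coalgebra.rTensor_counit_comul (R := k) (uh w₀)]
        have hc' := LinearMap.congr_fun hc w₀
        simp only [comp_apply] at hc'
        rw [← hc', ← hs, ← rTensor_comp_apply, ← rTensor_comp_apply, hzero,
          rTensor_zero, LinearMap.zero_apply]
      have := congrArg (TensorProduct.lid k C) hfinal
      simpa using this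
    intro a b hab
    have : f (a - b) = 0 := by rw [map_sub, hab, sub_self]
    have := hker _ this
    exact sub_eq_zero.mp this
  · -- surjectivity
    intro x
    obtain ⟨n, g, y, hy⟩ := part2 D x
    obtain ⟨g', hg'⟩ := (hf n).2 g
    exact ⟨g' y, by rw [← hy, ← hg']; rfl⟩
end

section
/- Let A, B be monoids in a locally presentable braided monoidal closed category V and let X be an object with a dual. Then right P(A,B)-comodule structures on X are in natural bijection with morphisms ψ : A ⊗ X → X ⊗ B in V satisfying: (1) ψ ∘ (μ_A ⊗ X) = (X ⊗ μ_B) ∘ (ψ ⊗ B) ∘ (A ⊗ ψ), and (2) ψ ∘ (ι_A ⊗ X) = X ⊗ ι_B (modulo unit constraints). -/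
open CategoryTheory CategoryTheory.Limits Opposite

universe v u

section Conv

variable {V : Type u} [Category.{v} V] [MonoidalCategory V] [BraidedCategory V]
  [MonoidalClosed V]

open MonoidalCategory MonoidalClosed

/-- The convolution multiplication on the internal hom `[C, B]` of a comonoid `C`
and a monoid `B`. -/
noncomputable def convMul (C : Comon V) (B : Mon V) :
    ((ihom C.X).obj B.X ⊗ (ihom C.X).obj B.X) ⟶ (ihom C.X).obj B.X :=
  MonoidalClosed.curry <|
    (ComonObj.comul (X := C.X) ▷ ((ihom C.X).obj B.X ⊗ (ihom C.X).obj B.X)) ≫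
      tensorμ C.X C.X ((ihom C.X).obj B.X) ((ihom C.X).obj B.X) ≫
      ((ihom.ev C.X).app B.X ⊗ₘ (ihom.ev C.X).app B.X) ≫ MonObj.mul (X := B.X)

/-- The convolution unit on `[C, B]`. -/
noncomputable def convOne (C : Comon V) (B : Mon V) :
    𝟙_ V ⟶ (ihom C.X).obj B.X :=
  MonoidalClosed.curry ((ρ_ C.X).hom ≫ ComonObj.counit (X := C.X) ≫ MonObj.one (X := B.X))

/-- `f` is a morphism of monoids from `A` to the convolution monoid `[C, B]`. -/
def IsConvMonHom (A : Mon V) (C : Comon V) (B : Mon V)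
    (f : A.X ⟶ (ihom C.X).obj B.X) : Prop :=
  MonObj.mul (X := A.X) ≫ f = (f ⊗ₘ f) ≫ convMul C B ∧ MonObj.one (X := A.X) ≫ f = convOne C B

end Conv

open MonoidalClosed MonoidalCategory

section MeasuringAux

open BraidedCategory ExactPairing

variable {V : Type u} [Category.{v} V] [MonoidalCategory V] [BraidedCategory V]
  [MonoidalClosed V]

variable (X Y : V) [ExactPairing X Y]

/-- The universal coaction `X ⟶ X ⊗ (Y ⊗ X)`. -/
noncomputable def rho0 : X ⟶ X ⊗ (Y ⊗ X) :=
  (λ_ X).inv ≫ (η_ X Y ▷ X) ≫ (α_ X Y X).hom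

lemma rho0_counit : rho0 X Y ≫ (X ◁ ε_ X Y) = (ρ_ X).inv := by
  simp [rho0]

/-- The coend comonoid structure on `Y ⊗ X`. -/
noncomputable def coendComonObj : ComonObj (Y ⊗ X) where
  counit := ε_ X Y
  comul := (Y ◁ rho0 X Y) ≫ (α_ Y X (Y ⊗ X)).inv
  counit_comul := by
    calc ((Y ◁ rho0 X Y) ≫ (α_ Y X (Y ⊗ X)).inv) ≫ (ε_ X Y ▷ (Y ⊗ X))
        = 𝟙 _ ⊗≫ (Y ◁ η_ X Y ⊗≫ ε_ X Y ▷ Y) ▷ X ⊗≫ 𝟙 _ := by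
          simp only [rho0]; monoidal
      _ = (λ_ (Y ⊗ X)).inv := by
          rw [ExactPairing.coevaluation_evaluation'']; monoidal
  comul_counit := by
    calc ((Y ◁ rho0 X Y) ≫ (α_ Y X (Y ⊗ X)).inv) ≫ ((Y ⊗ X) ◁ ε_ X Y)
        = 𝟙 _ ⊗≫ Y ◁ (η_ X Y ▷ X ⊗≫ X ◁ ε_ X Y) ⊗≫ 𝟙 _ := by
          simp only [rho0]; monoidal
      _ = (ρ_ (Y ⊗ X)).inv := by
          rw [ExactPairing.evaluation_coevaluation'']; monoidal
  comul_assoc := by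
    simp only [rho0]
    calc _ = 𝟙 _ ⊗≫ Y ◁ (η_ X Y ▷ 𝟙_ V ≫ (X ⊗ Y) ◁ η_ X Y) ▷ X ⊗≫ 𝟙 _ := by monoidal
      _ = 𝟙 _ ⊗≫ Y ◁ (𝟙_ V ◁ η_ X Y ≫ η_ X Y ▷ (X ⊗ Y)) ▷ X ⊗≫ 𝟙 _ := by
          rw [← whisker_exchange]
      _ = _ := by monoidal

/-- The coend comonoid on `Y ⊗ X`. -/
noncomputable abbrev coendComon : Comon V := { X := Y ⊗ X, comon := coendComonObj X Y }

lemma coendComon_X : (coendComon X Y).X = Y ⊗ X := rfl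

lemma coendComon_comul : ComonObj.comul (self := coendComonObj X Y) =
    (Y ◁ rho0 X Y) ≫ (α_ Y X (Y ⊗ X)).inv := rfl

lemma coendComon_counit : ComonObj.counit (self := coendComonObj X Y) = ε_ X Y := rfl

lemma rho0_coassoc :
    rho0 X Y ≫ (X ◁ ((Y ◁ rho0 X Y) ≫ (α_ Y X (Y ⊗ X)).inv)) =
      rho0 X Y ≫ (rho0 X Y ▷ ((Y : V) ⊗ X)) ≫ (α_ X (Y ⊗ X) (Y ⊗ X)).hom := by
  simp only [rho0]
  calc _ = 𝟙 _ ⊗≫ (η_ X Y ▷ 𝟙_ V ≫ ((X ⊗ Y : V)) ◁ η_ X Y) ▷ X ⊗≫ 𝟙 _ := by monoidal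
    _ = 𝟙 _ ⊗≫ (𝟙_ V ◁ η_ X Y ≫ η_ X Y ▷ ((X ⊗ Y : V))) ▷ X ⊗≫ 𝟙 _ := by
        rw [← whisker_exchange]
    _ = _ := by monoidal

variable {X Y}

/-- The measuring morphism associated to a coaction and an action-type morphism. -/
noncomputable def psiOf {QX : V} (ρ : X ⟶ X ⊗ QX) {W Z : V} (E : QX ⊗ W ⟶ Z) :
    W ⊗ X ⟶ X ⊗ Z :=
  (β_ X W).inv ≫ (ρ ▷ W) ≫ (α_ X QX W).hom ≫ (X ◁ E)

lemma psiOf_natural_left {QX : V} (ρ : X ⟶ X ⊗ QX) {W W' Z : V} (f : W ⟶ W')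
    (E : QX ⊗ W' ⟶ Z) :
    psiOf ρ ((QX ◁ f) ≫ E) = (f ▷ X) ≫ psiOf ρ E := by
  simp only [psiOf, MonoidalCategory.whiskerLeft_comp]
  rw [← associator_naturality_right_assoc, ← whisker_exchange_assoc,
    ← braiding_inv_naturality_left_assoc]

lemma psiOf_one {QX : V} (ρ : X ⟶ X ⊗ QX) (cu : QX ⟶ 𝟙_ V)
    (hcu : ρ ≫ (X ◁ cu) = (ρ_ X).inv)
    {W Z : V} (o : 𝟙_ V ⟶ W) (b : 𝟙_ V ⟶ Z) (E : QX ⊗ W ⟶ Z)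
    (hE : (QX ◁ o) ≫ E = (ρ_ QX).hom ≫ cu ≫ b) :
    (λ_ X).inv ≫ (o ▷ X) ≫ psiOf ρ E = (ρ_ X).inv ≫ (X ◁ b) := by
  simp only [psiOf]
  rw [braiding_inv_naturality_left_assoc, whisker_exchange_assoc,
    associator_naturality_right_assoc, ← MonoidalCategory.whiskerLeft_comp, hE,
    braiding_inv_tensorUnit_right]
  simp only [MonoidalCategory.whiskerLeft_comp]
  simp only [Category.assoc, Iso.inv_hom_id_assoc, MonoidalCategory.whiskerLeft_rightUnitor,
    Iso.hom_inv_id_assoc]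
  rw [rightUnitor_naturality_assoc, Iso.inv_hom_id_assoc, reassoc_of% hcu]

lemma psiOf_mul {QX : V} (ρ : X ⟶ X ⊗ QX) (cm : QX ⟶ QX ⊗ QX)
    (hcm : ρ ≫ (X ◁ cm) = ρ ≫ (ρ ▷ QX) ≫ (α_ X QX QX).hom)
    {W Z : V} (E : QX ⊗ W ⟶ Z) (m : Z ⊗ Z ⟶ Z) :
    (α_ W W X).hom ≫ (W ◁ psiOf ρ E) ≫ (α_ W X Z).inv ≫ (psiOf ρ E ▷ Z) ≫
        (α_ X Z Z).hom ≫ (X ◁ m) =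
      psiOf ρ ((cm ▷ (W ⊗ W)) ≫ tensorμ QX QX W W ≫ (E ⊗ₘ E) ≫ m) := by
  have hR : psiOf ρ ((cm ▷ (W ⊗ W)) ≫ tensorμ QX QX W W ≫ (E ⊗ₘ E) ≫ m) =
      (β_ X (W ⊗ W)).inv ≫ ((ρ ≫ (ρ ▷ QX) ≫ (α_ X QX QX).hom) ▷ (W ⊗ W)) ≫
        (α_ X (QX ⊗ QX) (W ⊗ W)).hom ≫ (X ◁ tensorμ QX QX W W) ≫
        (X ◁ (E ⊗ₘ E)) ≫ (X ◁ m) := by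
    simp only [psiOf, MonoidalCategory.whiskerLeft_comp]
    rw [← associator_naturality_middle_assoc, ← comp_whiskerRight_assoc, hcm]
  rw [hR]
  trans (𝟙 ((W ⊗ W) ⊗ X) ⊗≫ (W ◁ (β_ X W).inv) ⊗≫ (W ◁ (ρ ▷ W)) ⊗≫
    ((β_ X W).inv ▷ (QX ⊗ W)) ⊗≫ ((ρ ▷ W) ▷ (QX ⊗ W)) ⊗≫
    (X ◁ ((QX ⊗ W) ◁ E)) ⊗≫ (X ◁ (E ▷ Z)) ⊗≫ (X ◁ m))
  · simp only [psiOf]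
    calc _ = 𝟙 _ ⊗≫ (W ◁ (β_ X W).inv) ⊗≫ (W ◁ (ρ ▷ W)) ⊗≫
          (((W ⊗ X) ◁ E) ≫ ((β_ X W).inv ▷ Z)) ⊗≫ ((ρ ▷ W) ▷ Z) ⊗≫
          ((X ◁ E) ▷ Z) ⊗≫ (X ◁ m) := by monoidal
      _ = 𝟙 _ ⊗≫ (W ◁ (β_ X W).inv) ⊗≫ (W ◁ (ρ ▷ W)) ⊗≫
          ((β_ X W).inv ▷ (QX ⊗ W)) ⊗≫ (((X ⊗ W) ◁ E) ≫ ((ρ ▷ W) ▷ Z)) ⊗≫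
          ((X ◁ E) ▷ Z) ⊗≫ (X ◁ m) := by
          rw [whisker_exchange]; monoidal
      _ = 𝟙 _ ⊗≫ (W ◁ (β_ X W).inv) ⊗≫ (W ◁ (ρ ▷ W)) ⊗≫
          ((β_ X W).inv ▷ (QX ⊗ W)) ⊗≫ ((ρ ▷ W) ▷ (QX ⊗ W)) ⊗≫
          ((((X ⊗ QX) ⊗ W) ◁ E)) ⊗≫ ((X ◁ E) ▷ Z) ⊗≫ (X ◁ m) := by
          rw [whisker_exchange]; monoidal
      _ = _ := by monoidal
  · symm
    calc _ = 𝟙 _ ⊗≫ (W ◁ (β_ X W).inv) ⊗≫ (((β_ X W).inv ≫ (ρ ▷ W)) ▷ W) ⊗≫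
          ((ρ ▷ QX) ▷ (W ⊗ W)) ⊗≫ (X ◁ (QX ◁ ((β_ QX W).hom ▷ W))) ⊗≫
          (X ◁ ((QX ⊗ W) ◁ E)) ⊗≫ (X ◁ (E ▷ Z)) ⊗≫ (X ◁ m) := by
          rw [braiding_tensor_right_inv, tensorHom_def']
          simp only [tensorμ]
          monoidal
      _ = 𝟙 _ ⊗≫ (W ◁ (β_ X W).inv) ⊗≫ (((W ◁ ρ) ≫ ((β_ (X ⊗ QX) W).inv)) ▷ W) ⊗≫
          ((ρ ▷ QX) ▷ (W ⊗ W)) ⊗≫ (X ◁ (QX ◁ ((β_ QX W).hom ▷ W))) ⊗≫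
          (X ◁ ((QX ⊗ W) ◁ E)) ⊗≫ (X ◁ (E ▷ Z)) ⊗≫ (X ◁ m) := by
          rw [← braiding_inv_naturality_right]
      _ = 𝟙 _ ⊗≫ (W ◁ (β_ X W).inv) ⊗≫ (W ◁ (ρ ▷ W)) ⊗≫ ((β_ X W).inv ▷ (QX ⊗ W)) ⊗≫
          (((X ◁ (β_ QX W).inv) ≫ (ρ ▷ (QX ⊗ W))) ▷ W) ⊗≫
          (X ◁ (QX ◁ ((β_ QX W).hom ▷ W))) ⊗≫
          (X ◁ ((QX ⊗ W) ◁ E)) ⊗≫ (X ◁ (E ▷ Z)) ⊗≫ (X ◁ m) := by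
          rw [braiding_tensor_left_inv]
          monoidal
      _ = 𝟙 _ ⊗≫ (W ◁ (β_ X W).inv) ⊗≫ (W ◁ (ρ ▷ W)) ⊗≫ ((β_ X W).inv ▷ (QX ⊗ W)) ⊗≫
          (((ρ ▷ (W ⊗ QX)) ≫ ((X ⊗ QX) ◁ (β_ QX W).inv)) ▷ W) ⊗≫
          (X ◁ (QX ◁ ((β_ QX W).hom ▷ W))) ⊗≫
          (X ◁ ((QX ⊗ W) ◁ E)) ⊗≫ (X ◁ (E ▷ Z)) ⊗≫ (X ◁ m) := by
          rw [whisker_exchange]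
      _ = 𝟙 _ ⊗≫ (W ◁ (β_ X W).inv) ⊗≫ (W ◁ (ρ ▷ W)) ⊗≫ ((β_ X W).inv ▷ (QX ⊗ W)) ⊗≫
          ((ρ ▷ W) ▷ (QX ⊗ W)) ⊗≫
          (X ◁ (QX ◁ (((β_ QX W).inv ≫ (β_ QX W).hom) ▷ W))) ⊗≫
          (X ◁ ((QX ⊗ W) ◁ E)) ⊗≫ (X ◁ (E ▷ Z)) ⊗≫ (X ◁ m) := by monoidal
      _ = _ := by rw [Iso.inv_hom_id]; monoidal

variable (X Y)

/-- The hom transform underlying the bijection. -/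
noncomputable def theta (W Z : V) : ((Y ⊗ X) ⊗ W ⟶ Z) ≃ (W ⊗ X ⟶ X ⊗ Z) :=
  ((α_ Y X W).homCongr (Iso.refl Z)).trans
    ((tensorLeftHomEquiv (X ⊗ W) X Y Z).trans ((β_ X W).homCongr (Iso.refl (X ⊗ Z))))

lemma theta_apply (W Z : V) (u : (Y ⊗ X) ⊗ W ⟶ Z) :
    theta X Y W Z u = psiOf (rho0 X Y) u := by
  simp only [theta, psiOf, rho0, Equiv.trans_apply, Iso.homCongr_apply, Iso.refl_hom,
    Iso.symm_hom, tensorLeftHomEquiv, Equiv.coe_fn_mk, Category.comp_id, Category.assoc]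
  monoidal

lemma tensorLeftHomEquiv_apply_eq (Z : V) (u : (Y : V) ⊗ X ⟶ Z) :
    tensorLeftHomEquiv X X Y Z u = rho0 X Y ≫ (X ◁ u) := by
  simp [tensorLeftHomEquiv, rho0]

lemma e_counit_eq : tensorLeftHomEquiv X X Y (𝟙_ V) (ε_ X Y) = (ρ_ X).inv := by
  rw [tensorLeftHomEquiv_apply_eq, rho0_counit]

lemma e_comul_eq {QX : V} (u : (Y : V) ⊗ X ⟶ QX) :
    tensorLeftHomEquiv X X Y (QX ⊗ QX) ((ComonObj.comul (self := coendComonObj X Y)) ≫ (u ⊗ₘ u)) =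
      tensorLeftHomEquiv X X Y QX u ≫ (tensorLeftHomEquiv X X Y QX u ▷ QX) ≫
        (α_ X QX QX).hom := by
  rw [tensorLeftHomEquiv_apply_eq, tensorLeftHomEquiv_apply_eq]
  simp only [coendComon_comul]
  rw [MonoidalCategory.whiskerLeft_comp, reassoc_of% (rho0_coassoc X Y), comp_whiskerRight]
  simp only [Category.assoc]
  rw [whisker_exchange_assoc, MonoidalCategory.tensorHom_def]
  simp only [MonoidalCategory.whiskerLeft_comp, Category.assoc]
  rw [whisker_exchange_assoc]
  monoidal

/-- Comodule axioms correspond to comonoid morphism axioms across the hom equivalence. -/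
lemma comodule_iff (QQ : Comon V) (u : (Y : V) ⊗ X ⟶ QQ.X) :
    (u ≫ (ComonObj.counit (X := QQ.X)) = ε_ X Y ∧
        u ≫ (ComonObj.comul (X := QQ.X)) = (ComonObj.comul (self := coendComonObj X Y)) ≫ (u ⊗ₘ u)) ↔
      (tensorLeftHomEquiv X X Y QQ.X u ≫ (X ◁ (ComonObj.counit (X := QQ.X))) ≫ (ρ_ X).hom = 𝟙 X ∧
        tensorLeftHomEquiv X X Y QQ.X u ≫ (X ◁ (ComonObj.comul (X := QQ.X))) =
          tensorLeftHomEquiv X X Y QQ.X u ≫ (tensorLeftHomEquiv X X Y QQ.X u ▷ QQ.X) ≫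
            (α_ X QQ.X QQ.X).hom) := by
  constructor
  · rintro ⟨h1, h2⟩
    constructor
    · have h : tensorLeftHomEquiv X X Y (𝟙_ V) (u ≫ (ComonObj.counit (X := QQ.X))) =
          tensorLeftHomEquiv X X Y QQ.X u ≫ X ◁ (ComonObj.counit (X := QQ.X)) :=
        tensorLeftHomEquiv_naturality u (ComonObj.counit (X := QQ.X))
      rw [h1, e_counit_eq] at h
      rw [← Category.assoc, ← h]
      simp
    · have h : tensorLeftHomEquiv X X Y (QQ.X ⊗ QQ.X) (u ≫ (ComonObj.comul (X := QQ.X))) =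
          tensorLeftHomEquiv X X Y QQ.X u ≫ X ◁ (ComonObj.comul (X := QQ.X)) :=
        tensorLeftHomEquiv_naturality u (ComonObj.comul (X := QQ.X))
      rw [h2, e_comul_eq] at h
      exact h.symm
  · rintro ⟨h1, h2⟩
    have hnc : tensorLeftHomEquiv X X Y (𝟙_ V) (u ≫ (ComonObj.counit (X := QQ.X))) =
        tensorLeftHomEquiv X X Y QQ.X u ≫ X ◁ (ComonObj.counit (X := QQ.X)) :=
      tensorLeftHomEquiv_naturality u (ComonObj.counit (X := QQ.X))
    have hnm : tensorLeftHomEquiv X X Y (QQ.X ⊗ QQ.X) (u ≫ (ComonObj.comul (X := QQ.X))) =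
        tensorLeftHomEquiv X X Y QQ.X u ≫ X ◁ (ComonObj.comul (X := QQ.X)) :=
      tensorLeftHomEquiv_naturality u (ComonObj.comul (X := QQ.X))
    constructor
    · apply (tensorLeftHomEquiv X X Y (𝟙_ V)).injective
      rw [hnc, e_counit_eq, ← cancel_mono (ρ_ X).hom]
      simpa using h1
    · apply (tensorLeftHomEquiv X X Y (QQ.X ⊗ QQ.X)).injective
      rw [hnm, e_comul_eq, h2]

variable {X Y}

/-- Being a convolution monoid morphism in terms of the uncurried morphism. -/
lemma uncurry_convMul {Z Z' : V} (D : Comon V) (B : Mon V)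
    (f : Z ⟶ (ihom D.X).obj B.X) (f' : Z' ⟶ (ihom D.X).obj B.X) :
    uncurry ((f ⊗ₘ f') ≫ convMul D B) =
      ((ComonObj.comul (X := D.X)) ▷ (Z ⊗ Z')) ≫ tensorμ D.X D.X Z Z' ≫ (uncurry f ⊗ₘ uncurry f') ≫ (MonObj.mul (X := B.X)) := by
  rw [uncurry_natural_left, convMul, uncurry_curry, whisker_exchange_assoc]
  slice_lhs 2 3 => rw [tensorμ_natural_right]
  simp only [Category.assoc]
  rw [tensorHom_comp_tensorHom_assoc, ← uncurry_eq, ← uncurry_eq]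

lemma uncurry_convOne (D : Comon V) (B : Mon V) :
    uncurry (convOne D B) = (ρ_ D.X).hom ≫ (ComonObj.counit (X := D.X)) ≫ (MonObj.one (X := B.X)) := by
  rw [convOne, uncurry_curry]

lemma isConvMonHom_iff (A B : Mon V) (D : Comon V) (f : A.X ⟶ (ihom D.X).obj B.X) :
    IsConvMonHom A D B f ↔
      ((D.X ◁ (MonObj.mul (X := A.X))) ≫ uncurry f =
          ((ComonObj.comul (X := D.X)) ▷ (A.X ⊗ A.X)) ≫ tensorμ D.X D.X A.X A.X ≫
            (uncurry f ⊗ₘ uncurry f) ≫ (MonObj.mul (X := B.X)) ∧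
        (D.X ◁ (MonObj.one (X := A.X))) ≫ uncurry f = (ρ_ D.X).hom ≫ (ComonObj.counit (X := D.X)) ≫ (MonObj.one (X := B.X))) := by
  constructor
  · rintro ⟨h1, h2⟩
    exact ⟨by rw [← uncurry_natural_left, h1, uncurry_convMul],
      by rw [← uncurry_natural_left, h2, uncurry_convOne]⟩
  · rintro ⟨h1, h2⟩
    exact ⟨uncurry_injective (by rw [uncurry_natural_left, uncurry_convMul]; exact h1),
      uncurry_injective (by rw [uncurry_natural_left, uncurry_convOne]; exact h2)⟩

lemma uncurry_comp_pre (A B : Mon V) (D Q : Comon V) (g : D.X ⟶ Q.X)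
    (f : A.X ⟶ (ihom Q.X).obj B.X) :
    uncurry (f ≫ (MonoidalClosed.pre g).app B.X) = (g ▷ A.X) ≫ uncurry f := by
  rw [uncurry_natural_left, MonoidalClosed.uncurry_pre, whisker_exchange_assoc, ← uncurry_eq]

/-- The restricted morphism satisfies the uncurried convolution conditions. -/
lemma restricted_conds (A B : Mon V) (Q : Comon V) (E : Q.X ⊗ A.X ⟶ B.X)
    (hM : (Q.X ◁ (MonObj.mul (X := A.X))) ≫ E =
      ((ComonObj.comul (X := Q.X)) ▷ (A.X ⊗ A.X)) ≫ tensorμ Q.X Q.X A.X A.X ≫ (E ⊗ₘ E) ≫ (MonObj.mul (X := B.X)))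
    (hU : (Q.X ◁ (MonObj.one (X := A.X))) ≫ E = (ρ_ Q.X).hom ≫ (ComonObj.counit (X := Q.X)) ≫ (MonObj.one (X := B.X)))
    (D : Comon V) (g : D.X ⟶ Q.X) (hgc : g ≫ (ComonObj.counit (X := Q.X)) = (ComonObj.counit (X := D.X)))
    (hgm : g ≫ (ComonObj.comul (X := Q.X)) = (ComonObj.comul (X := D.X)) ≫ (g ⊗ₘ g)) :
    ((D.X ◁ (MonObj.mul (X := A.X))) ≫ ((g ▷ A.X) ≫ E) =
        ((ComonObj.comul (X := D.X)) ▷ (A.X ⊗ A.X)) ≫ tensorμ D.X D.X A.X A.X ≫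
          (((g ▷ A.X) ≫ E) ⊗ₘ ((g ▷ A.X) ≫ E)) ≫ (MonObj.mul (X := B.X)) ∧
      (D.X ◁ (MonObj.one (X := A.X))) ≫ ((g ▷ A.X) ≫ E) = (ρ_ D.X).hom ≫ (ComonObj.counit (X := D.X)) ≫ (MonObj.one (X := B.X))) := by
  constructor
  · rw [whisker_exchange_assoc]
    rw [hM]
    rw [← comp_whiskerRight_assoc]
    rw [hgm]
    rw [comp_whiskerRight]
    rw [Category.assoc]
    rw [reassoc_of% (tensorμ_natural_left g g A.X A.X)]
    rw [tensorHom_comp_tensorHom_assoc]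
  · rw [whisker_exchange_assoc, hU, rightUnitor_naturality_assoc]
    slice_lhs 2 3 => rw [hgc]

end MeasuringAux

/-- Let `A`, `B` be monoids in a locally presentable braided monoidal closed category
`V`, let `P(A,B)` be the universal measuring comonoid, and let `X` be an object with a
dual.  Then right `P(A,B)`-comodule structures on `X` are in bijection with morphisms
`ψ : A ⊗ X ⟶ X ⊗ B` satisfying `ψ ∘ (μ_A ⊗ X) = (X ⊗ μ_B) ∘ (ψ ⊗ B) ∘ (A ⊗ ψ)` and
`ψ ∘ (ι_A ⊗ X) = X ⊗ ι_B` (modulo the structural constraint isomorphisms). -/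
theorem comodule_structures_equiv_measuring_morphisms
    {V : Type u} [Category.{v} V] [MonoidalCategory V] [BraidedCategory V]
    [MonoidalClosed V] (hV : IsLocallyPresentableCat V)
    (A B : Mon V)
    (Q : Comon V) (η : A.X ⟶ (ihom Q.X).obj B.X)
    (hη : IsConvMonHom A Q B η)
    (hUP : ∀ (C : Comon V) (f : A.X ⟶ (ihom C.X).obj B.X), IsConvMonHom A C B f →
      ∃! g : C ⟶ Q, f = η ≫ (MonoidalClosed.pre g.hom).app B.X)
    (X : V) [HasLeftDual X] :
    Nonempty (
      {ρ : X ⟶ (X ⊗ Q.X : V) //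
          ρ ≫ (X ◁ ComonObj.counit (X := Q.X)) ≫ (ρ_ X).hom = 𝟙 X ∧
          ρ ≫ (X ◁ ComonObj.comul (X := Q.X)) = ρ ≫ (ρ ▷ Q.X) ≫ (α_ X Q.X Q.X).hom } ≃
      {ψ : (A.X ⊗ X : V) ⟶ (X ⊗ B.X : V) //
          (MonObj.mul (X := A.X) ▷ X) ≫ ψ =
            (α_ A.X A.X X).hom ≫ (A.X ◁ ψ) ≫ (α_ A.X X B.X).inv ≫
              (ψ ▷ B.X) ≫ (α_ X B.X B.X).hom ≫ (X ◁ MonObj.mul (X := B.X)) ∧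
          (λ_ X).inv ≫ (MonObj.one (X := A.X) ▷ X) ≫ ψ = (ρ_ X).inv ≫ (X ◁ MonObj.one (X := B.X)) }) := by
  letI : ExactPairing X (ᘁX) := BraidedCategory.exactPairing_swap (ᘁX) X
  obtain ⟨hm, hu⟩ := (isConvMonHom_iff A B Q η).mp hη
  have e1 : {u : (ᘁX : V) ⊗ X ⟶ Q.X //
      u ≫ (ComonObj.counit (X := Q.X)) = ε_ X (ᘁX) ∧
        u ≫ (ComonObj.comul (X := Q.X)) = (ComonObj.comul (self := coendComonObj X (ᘁX))) ≫ (u ⊗ₘ u)} ≃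
      {ρ : X ⟶ (X ⊗ Q.X : V) //
      ρ ≫ (X ◁ (ComonObj.counit (X := Q.X))) ≫ (ρ_ X).hom = 𝟙 X ∧
      ρ ≫ (X ◁ (ComonObj.comul (X := Q.X))) = ρ ≫ (ρ ▷ Q.X) ≫ (α_ X Q.X Q.X).hom } :=
    Equiv.subtypeEquiv (tensorLeftHomEquiv X X (ᘁX) Q.X)
      (fun u => comodule_iff X (ᘁX) Q u)
  -- the map from comonoid morphism data to measuring morphisms
  have key : ∀ (u : (ᘁX : V) ⊗ X ⟶ Q.X), u ≫ (ComonObj.counit (X := Q.X)) = ε_ X (ᘁX) →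
      u ≫ (ComonObj.comul (X := Q.X)) = (ComonObj.comul (self := coendComonObj X (ᘁX))) ≫ (u ⊗ₘ u) →
      (((MonObj.mul (X := A.X)) ▷ X) ≫ theta X (ᘁX) A.X B.X ((u ▷ A.X) ≫ uncurry η) =
      (α_ A.X A.X X).hom ≫ (A.X ◁ theta X (ᘁX) A.X B.X ((u ▷ A.X) ≫ uncurry η)) ≫
        (α_ A.X X B.X).inv ≫
        (theta X (ᘁX) A.X B.X ((u ▷ A.X) ≫ uncurry η) ▷ B.X) ≫
        (α_ X B.X B.X).hom ≫ (X ◁ (MonObj.mul (X := B.X))) ∧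
      (λ_ X).inv ≫ ((MonObj.one (X := A.X)) ▷ X) ≫ theta X (ᘁX) A.X B.X ((u ▷ A.X) ≫ uncurry η) =
        (ρ_ X).inv ≫ (X ◁ (MonObj.one (X := B.X)))) := by
    intro u hu1 hu2
    obtain ⟨hg1, hg2⟩ := restricted_conds A B Q (uncurry η) hm hu (coendComon X (ᘁX)) u hu1 hu2
    simp only [coendComon_X] at hg1 hg2
    rw [theta_apply]
    constructor
    · rw [psiOf_mul (rho0 X (ᘁX)) ((ComonObj.comul (self := coendComonObj X (ᘁX)))) (rho0_coassoc X (ᘁX)) _ (MonObj.mul (X := B.X)),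
        ← hg1, psiOf_natural_left]
    · exact psiOf_one (rho0 X (ᘁX)) (ComonObj.counit (self := coendComonObj X (ᘁX))) (rho0_counit X (ᘁX))
        (MonObj.one (X := A.X)) (MonObj.one (X := B.X)) _ hg2
  have curry_eq_pre : ∀ u : (ᘁX : V) ⊗ X ⟶ Q.X,
      curry ((u ▷ A.X) ≫ uncurry η) =
        η ≫ (MonoidalClosed.pre (show (coendComon X (ᘁX)).X ⟶ Q.X from u)).app B.X := by
    intro u
    apply uncurry_injective
    rw [uncurry_curry, uncurry_comp_pre A B (coendComon X (ᘁX)) Q u η]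
  have e2 : {u : (ᘁX : V) ⊗ X ⟶ Q.X //
      u ≫ (ComonObj.counit (X := Q.X)) = ε_ X (ᘁX) ∧
        u ≫ (ComonObj.comul (X := Q.X)) = (ComonObj.comul (self := coendComonObj X (ᘁX))) ≫ (u ⊗ₘ u)} ≃
      {ψ : (A.X ⊗ X : V) ⟶ (X ⊗ B.X : V) //
      ((MonObj.mul (X := A.X)) ▷ X) ≫ ψ =
        (α_ A.X A.X X).hom ≫ (A.X ◁ ψ) ≫ (α_ A.X X B.X).inv ≫
          (ψ ▷ B.X) ≫ (α_ X B.X B.X).hom ≫ (X ◁ (MonObj.mul (X := B.X))) ∧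
      (λ_ X).inv ≫ ((MonObj.one (X := A.X)) ▷ X) ≫ ψ = (ρ_ X).inv ≫ (X ◁ (MonObj.one (X := B.X))) } := by
    apply Equiv.ofBijective (fun u =>
      ⟨theta X (ᘁX) A.X B.X ((u.1 ▷ A.X) ≫ uncurry η), key u.1 u.2.1 u.2.2⟩)
    constructor
    · rintro ⟨u, hu1, hu2⟩ ⟨u', hu1', hu2'⟩ h
      have h' : ((u ▷ A.X) ≫ uncurry η) = ((u' ▷ A.X) ≫ uncurry η) :=
        (theta X (ᘁX) A.X B.X).injective (congrArg Subtype.val h)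
      have hconv : IsConvMonHom A (coendComon X (ᘁX)) B (curry ((u ▷ A.X) ≫ uncurry η)) := by
        rw [isConvMonHom_iff, uncurry_curry]
        exact restricted_conds A B Q (uncurry η) hm hu (coendComon X (ᘁX)) u hu1 hu2
      obtain ⟨g, hg, hgu⟩ := hUP (coendComon X (ᘁX)) _ hconv
      have h1 : (Comon.Hom.mk' (M := coendComon X (ᘁX)) (N := Q) u hu1 hu2 : coendComon X (ᘁX) ⟶ Q) = g := hgu _ (by rw [curry_eq_pre u])
      have h2 : (Comon.Hom.mk' (M := coendComon X (ᘁX)) (N := Q) u' hu1' hu2' : coendComon X (ᘁX) ⟶ Q) = g :=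
        hgu _ (by rw [h', curry_eq_pre u'])
      exact Subtype.ext (congrArg Comon.Hom.hom (h1.trans h2.symm))
    · rintro ⟨ψ, h1, h2⟩
      -- transport the measuring conditions backwards through `theta`
      have hψ : theta X (ᘁX) A.X B.X ((theta X (ᘁX) A.X B.X).symm ψ) = ψ :=
        (theta X (ᘁX) A.X B.X).apply_symm_apply ψ
      have hpsi : psiOf (rho0 X (ᘁX)) ((theta X (ᘁX) A.X B.X).symm ψ) = ψ := by
        rw [← theta_apply, hψ]
      have hMC : (((ᘁX : V) ⊗ X) ◁ (MonObj.mul (X := A.X))) ≫ (theta X (ᘁX) A.X B.X).symm ψ =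
          ((ComonObj.comul (self := coendComonObj X (ᘁX))) ▷ (A.X ⊗ A.X)) ≫
            tensorμ ((ᘁX : V) ⊗ X) ((ᘁX : V) ⊗ X) A.X A.X ≫
            ((theta X (ᘁX) A.X B.X).symm ψ ⊗ₘ (theta X (ᘁX) A.X B.X).symm ψ) ≫ (MonObj.mul (X := B.X)) := by
        apply (theta X (ᘁX) (A.X ⊗ A.X) B.X).injective
        rw [theta_apply, theta_apply, psiOf_natural_left, hpsi,
          ← psiOf_mul (rho0 X (ᘁX)) ((ComonObj.comul (self := coendComonObj X (ᘁX)))) (rho0_coassoc X (ᘁX))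
            ((theta X (ᘁX) A.X B.X).symm ψ) (MonObj.mul (X := B.X)), hpsi, h1]
      have hUC : (((ᘁX : V) ⊗ X) ◁ (MonObj.one (X := A.X))) ≫ (theta X (ᘁX) A.X B.X).symm ψ =
          (ρ_ ((ᘁX : V) ⊗ X)).hom ≫ (ComonObj.counit (self := coendComonObj X (ᘁX))) ≫ (MonObj.one (X := B.X)) := by
        apply (theta X (ᘁX) (𝟙_ V) B.X).injective
        rw [theta_apply, theta_apply, psiOf_natural_left, hpsi]
        have h3 := psiOf_one (rho0 X (ᘁX)) (ComonObj.counit (self := coendComonObj X (ᘁX))) (rho0_counit X (ᘁX))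
          (𝟙 (𝟙_ V)) (MonObj.one (X := B.X)) ((ρ_ ((ᘁX : V) ⊗ X)).hom ≫ (ComonObj.counit (self := coendComonObj X (ᘁX))) ≫ (MonObj.one (X := B.X)))
          (by simp)
        simp only [MonoidalCategory.id_whiskerRight, Category.id_comp] at h3
        rw [← cancel_epi (λ_ X).inv, h2]
        exact h3.symm
      have hconv : IsConvMonHom A (coendComon X (ᘁX)) B
          (curry ((theta X (ᘁX) A.X B.X).symm ψ)) := by
        rw [isConvMonHom_iff, uncurry_curry]; exact ⟨hMC, hUC⟩
      obtain ⟨g, hg, hgu⟩ := hUP (coendComon X (ᘁX)) _ hconv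
      refine ⟨⟨g.hom, g.isComonHom_hom.1, g.isComonHom_hom.2⟩, ?_⟩
      apply Subtype.ext
      have hE : (g.hom ▷ A.X) ≫ uncurry η = (theta X (ᘁX) A.X B.X).symm ψ := by
        rw [← uncurry_comp_pre A B (coendComon X (ᘁX)) Q g.hom η, ← hg, uncurry_curry]
      simpa [hE] using hψ
  exact ⟨e1.symm.trans e2⟩
end

section
/- Let H be a bimonoid in a braided monoidal category. Then H is a Hopf monoid (i.e. admits an antipode) if and only if the fusion operator h = (H ⊗ μ) ∘ (Δ ⊗ H) : H⊗H → H⊗H is invertible, if and only if the fusion operator h' = (μ ⊗ H) ∘ (H ⊗ Δ) : H⊗H → H⊗H is invertible. -/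
open CategoryTheory MonoidalCategory

universe v u

section Fusion

variable {V : Type u} [Category.{v} V] [MonoidalCategory V]
variable (X : V) (mul : X ⊗ X ⟶ X) (one : 𝟙_ V ⟶ X)
  (comul : X ⟶ X ⊗ X) (counit : X ⟶ 𝟙_ V)

/-- The monoid morphism from the convolution monoid to endomorphisms of `X ⊗ X`. -/
private def Phi (f : X ⟶ X) : X ⊗ X ⟶ X ⊗ X :=
  (comul ▷ X) ≫ (α_ X X X).hom ≫ (X ◁ (f ▷ X)) ≫ (X ◁ mul)

/-- A retraction of `Phi`. -/
private def Psi (F : X ⊗ X ⟶ X ⊗ X) : X ⟶ X :=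
  (ρ_ X).inv ≫ (X ◁ one) ≫ F ≫ (counit ▷ X) ≫ (λ_ X).hom

private theorem Phi_id : Phi X mul comul (𝟙 X) = (comul ▷ X) ≫ (α_ X X X).hom ≫ (X ◁ mul) := by
  simp [Phi]

private theorem Phi_counit_one (h_comul_counit : comul ≫ (X ◁ counit) = (ρ_ X).inv)
    (h_one_mul : (one ▷ X) ≫ mul = (λ_ X).hom) :
    Phi X mul comul (counit ≫ one) = 𝟙 (X ⊗ X) := by
  rw [Phi, comp_whiskerRight, MonoidalCategory.whiskerLeft_comp_assoc,
    ← MonoidalCategory.whiskerLeft_comp, h_one_mul,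
    ← associator_naturality_middle_assoc, ← comp_whiskerRight_assoc, h_comul_counit,
    MonoidalCategory.triangle, ← comp_whiskerRight, Iso.inv_hom_id, id_whiskerRight]

private theorem Phi_mul (hμ : (mul ▷ X) ≫ mul = (α_ X X X).hom ≫ (X ◁ mul) ≫ mul)
    (hΔ : comul ≫ (X ◁ comul) = comul ≫ (comul ▷ X) ≫ (α_ X X X).hom)
    (f g : X ⟶ X) :
    Phi X mul comul f ≫ Phi X mul comul g = Phi X mul comul (comul ≫ (g ⊗ₘ f) ≫ mul) := by
  rw [Phi, Phi, Phi, MonoidalCategory.tensorHom_def]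
  simp only [comp_whiskerRight, Category.assoc, ← MonoidalCategory.whiskerLeft_comp]
  rw [hμ, associator_naturality_middle_assoc (f := f), associator_naturality_left_assoc (f := g)]
  simp only [MonoidalCategory.whiskerLeft_comp, Category.assoc]
  rw [whisker_exchange_assoc, whisker_exchange_assoc,
    associator_naturality_right_assoc, associator_naturality_right_assoc,
    ← associator_naturality_left_assoc (f := comul), ← comp_whiskerRight_assoc,
    show comul ≫ comul ▷ X = comul ≫ (X ◁ comul) ≫ (α_ X X X).inv by
      rw [reassoc_of% hΔ]; simp]
  have sw1 : X ◁ (X ◁ mul) ≫ X ◁ (g ▷ X) = X ◁ (g ▷ (X ⊗ X)) ≫ X ◁ (X ◁ mul) := by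
    rw [← MonoidalCategory.whiskerLeft_comp, ← MonoidalCategory.whiskerLeft_comp,
      whisker_exchange]
  have sw2 : X ◁ (X ◁ (f ▷ X)) ≫ X ◁ (g ▷ (X ⊗ X)) =
      X ◁ (g ▷ (X ⊗ X)) ≫ X ◁ (X ◁ (f ▷ X)) := by
    rw [← MonoidalCategory.whiskerLeft_comp, ← MonoidalCategory.whiskerLeft_comp,
      whisker_exchange]
  rw [reassoc_of% sw1, reassoc_of% sw2]
  rw [← associator_naturality_middle_assoc (f := comul), ← comp_whiskerRight_assoc (f := comul)]
  simp only [comp_whiskerRight, Category.assoc]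
  congr 2
  monoidal

private theorem Psi_Phi (h_counit_comul : comul ≫ (counit ▷ X) = (λ_ X).inv)
    (h_mul_one : (X ◁ one) ≫ mul = (ρ_ X).hom) (f : X ⟶ X) :
    Psi X one counit (Phi X mul comul f) = f := by
  rw [Psi, Phi]
  simp only [Category.assoc]
  rw [whisker_exchange_assoc, ← rightUnitor_inv_naturality_assoc,
    associator_naturality_right_assoc]
  have coh : (ρ_ (X ⊗ X)).inv ≫ (α_ X X (𝟙_ V)).hom = X ◁ (ρ_ X).inv := by monoidal
  rw [reassoc_of% coh, ← MonoidalCategory.whiskerLeft_comp_assoc,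
    ← MonoidalCategory.whiskerLeft_comp_assoc,
    ← MonoidalCategory.whiskerLeft_comp_assoc]
  rw [show (((ρ_ X).inv ≫ X ◁ one) ≫ f ▷ X) ≫ mul = f by
    simp only [Category.assoc]
    rw [whisker_exchange_assoc, ← rightUnitor_inv_naturality_assoc, h_mul_one,
      Iso.inv_hom_id, Category.comp_id]]
  rw [whisker_exchange_assoc, reassoc_of% h_counit_comul]
  simp

private theorem fuseH_mod (hμ : (mul ▷ X) ≫ mul = (α_ X X X).hom ≫ (X ◁ mul) ≫ mul) :
    (α_ X X X).hom ≫ (X ◁ mul) ≫ ((comul ▷ X) ≫ (α_ X X X).hom ≫ (X ◁ mul))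
      = (((comul ▷ X) ≫ (α_ X X X).hom ≫ (X ◁ mul)) ▷ X) ≫ (α_ X X X).hom ≫ (X ◁ mul) := by
  simp only [comp_whiskerRight, Category.assoc]
  rw [whisker_exchange_assoc, associator_naturality_right_assoc,
    associator_naturality_middle_assoc]
  simp only [← MonoidalCategory.whiskerLeft_comp, Category.assoc]
  rw [hμ]
  simp only [MonoidalCategory.whiskerLeft_comp, Category.assoc]
  rw [pentagon_assoc, associator_naturality_left_assoc]

private theorem fuseH_comod
    (hΔ : comul ≫ (X ◁ comul) = comul ≫ (comul ▷ X) ≫ (α_ X X X).hom) :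
    ((comul ▷ X) ≫ (α_ X X X).hom ≫ (X ◁ mul)) ≫ (comul ▷ X) ≫ (α_ X X X).hom
      = (comul ▷ X) ≫ (α_ X X X).hom ≫ (X ◁ ((comul ▷ X) ≫ (α_ X X X).hom ≫ (X ◁ mul))) := by
  simp only [MonoidalCategory.whiskerLeft_comp, Category.assoc]
  rw [whisker_exchange_assoc, associator_naturality_right,
    ← associator_naturality_left_assoc, ← comp_whiskerRight_assoc,
    show comul ≫ comul ▷ X = comul ≫ (X ◁ comul) ≫ (α_ X X X).inv by
      rw [reassoc_of% hΔ]; simp,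
    ← associator_naturality_middle_assoc, ← comp_whiskerRight_assoc (f := comul)]
  simp only [comp_whiskerRight, Category.assoc]
  congr 2
  monoidal

private theorem Phi_Psi (h_one_mul : (one ▷ X) ≫ mul = (λ_ X).hom)
    (h_comul_counit : comul ≫ (X ◁ counit) = (ρ_ X).inv)
    (F : X ⊗ X ⟶ X ⊗ X)
    (hmod : (α_ X X X).hom ≫ (X ◁ mul) ≫ F = (F ▷ X) ≫ (α_ X X X).hom ≫ (X ◁ mul))
    (hcomod : F ≫ (comul ▷ X) ≫ (α_ X X X).hom
      = (comul ▷ X) ≫ (α_ X X X).hom ≫ (X ◁ F)) :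
    F = Phi X mul comul (Psi X one counit F) := by
  rw [Phi, Psi]
  set G : X ⟶ X ⊗ X := (ρ_ X).inv ≫ (X ◁ one) ≫ F with hG
  have hmod' : (X ◁ mul) ≫ F = (α_ X X X).inv ≫ (F ▷ X) ≫ (α_ X X X).hom ≫ (X ◁ mul) := by
    rw [← hmod]; simp
  have stepA : F = (G ▷ X) ≫ (α_ X X X).hom ≫ (X ◁ mul) := by
    calc F = (X ◁ (λ_ X).inv) ≫ (X ◁ (one ▷ X)) ≫ (X ◁ mul) ≫ F := by
            rw [← MonoidalCategory.whiskerLeft_comp_assoc,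
              ← MonoidalCategory.whiskerLeft_comp_assoc, Category.assoc, h_one_mul]
            simp
      _ = (X ◁ (λ_ X).inv) ≫ (X ◁ (one ▷ X)) ≫ (α_ X X X).inv ≫ (F ▷ X) ≫
            (α_ X X X).hom ≫ (X ◁ mul) := by rw [hmod']
      _ = (G ▷ X) ≫ (α_ X X X).hom ≫ (X ◁ mul) := by
            rw [hG]
            have : (X ◁ (λ_ X).inv) ≫ (X ◁ (one ▷ X)) ≫ (α_ X X X).inv
                = (((ρ_ X).inv ≫ (X ◁ one)) ▷ X) := by
              rw [associator_inv_naturality_middle]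
              have : (X ◁ (λ_ X).inv) ≫ (α_ X (𝟙_ V) X).inv = (ρ_ X).inv ▷ X := by monoidal
              rw [reassoc_of% this, ← comp_whiskerRight]
            rw [reassoc_of% this]
            simp only [comp_whiskerRight, Category.assoc]
  have stepB : G ≫ (comul ▷ X) ≫ (α_ X X X).hom = comul ≫ (X ◁ G) := by
    have coh : (ρ_ (X ⊗ X)).inv ≫ (α_ X X (𝟙_ V)).hom = X ◁ (ρ_ X).inv := by monoidal
    rw [hG]
    simp only [Category.assoc]
    rw [hcomod, whisker_exchange_assoc, ← rightUnitor_inv_naturality_assoc,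
      associator_naturality_right_assoc, reassoc_of% coh]
    simp only [MonoidalCategory.whiskerLeft_comp, Category.assoc]
  have stepC : G = comul ≫ (X ◁ (G ≫ (counit ▷ X) ≫ (λ_ X).hom)) := by
    have e0 : G ≫ (comul ▷ X) ≫ ((X ◁ counit) ▷ X) ≫ ((ρ_ X).hom ▷ X) = G := by
      rw [← comp_whiskerRight_assoc, h_comul_counit, ← comp_whiskerRight, Iso.inv_hom_id,
        id_whiskerRight, Category.comp_id]
    calc G = G ≫ (comul ▷ X) ≫ ((X ◁ counit) ▷ X) ≫ ((ρ_ X).hom ▷ X) := e0.symm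
      _ = G ≫ (comul ▷ X) ≫ (α_ X X X).hom ≫ (X ◁ (counit ▷ X)) ≫ (α_ X (𝟙_ V) X).inv ≫
            ((ρ_ X).hom ▷ X) := by
          rw [← associator_naturality_middle_assoc]
          simp
      _ = comul ≫ (X ◁ G) ≫ (X ◁ (counit ▷ X)) ≫ (X ◁ (λ_ X).hom) := by
          rw [reassoc_of% stepB]
          have coh2 : (α_ X (𝟙_ V) X).inv ≫ ((ρ_ X).hom ▷ X) = X ◁ (λ_ X).hom := by monoidal
          rw [coh2]
      _ = comul ≫ (X ◁ (G ≫ (counit ▷ X) ≫ (λ_ X).hom)) := by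
          simp [MonoidalCategory.whiskerLeft_comp]
  conv_lhs => rw [stepA]
  rw [show G ≫ (counit ▷ X) ≫ (λ_ X).hom
      = ((ρ_ X).inv ≫ (X ◁ one) ≫ F ≫ (counit ▷ X) ≫ (λ_ X).hom) by rw [hG]; simp] at stepC
  conv_lhs => rw [stepC]
  rw [comp_whiskerRight, Category.assoc, associator_naturality_middle_assoc]

private theorem hopf_iff_fusion
    (hμ : (mul ▷ X) ≫ mul = (α_ X X X).hom ≫ (X ◁ mul) ≫ mul)
    (h_one_mul : (one ▷ X) ≫ mul = (λ_ X).hom)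
    (h_mul_one : (X ◁ one) ≫ mul = (ρ_ X).hom)
    (hΔ : comul ≫ (X ◁ comul) = comul ≫ (comul ▷ X) ≫ (α_ X X X).hom)
    (h_counit_comul : comul ≫ (counit ▷ X) = (λ_ X).inv)
    (h_comul_counit : comul ≫ (X ◁ counit) = (ρ_ X).inv) :
    (∃ s : X ⟶ X,
        comul ≫ (s ▷ X) ≫ mul = counit ≫ one ∧
        comul ≫ (X ◁ s) ≫ mul = counit ≫ one) ↔
      IsIso ((comul ▷ X) ≫ (α_ X X X).hom ≫ (X ◁ mul)) := by
  constructor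
  · rintro ⟨s, hs1, hs2⟩
    refine ⟨Phi X mul comul s, ?_, ?_⟩
    · have e := Phi_mul X mul comul hμ hΔ (𝟙 X) s
      rw [Phi_id, tensorHom_id, hs1,
        Phi_counit_one X mul one comul counit h_comul_counit h_one_mul] at e
      exact e
    · have e := Phi_mul X mul comul hμ hΔ s (𝟙 X)
      rw [Phi_id, id_tensorHom, hs2,
        Phi_counit_one X mul one comul counit h_comul_counit h_one_mul] at e
      exact e
  · intro hiso
    set h : X ⊗ X ⟶ X ⊗ X := (comul ▷ X) ≫ (α_ X X X).hom ≫ (X ◁ mul) with hh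
    set F : X ⊗ X ⟶ X ⊗ X := CategoryTheory.inv h with hF
    have h1 : h ≫ F = 𝟙 (X ⊗ X) := IsIso.hom_inv_id h
    have h2 : F ≫ h = 𝟙 (X ⊗ X) := IsIso.inv_hom_id h
    have hmod : (α_ X X X).hom ≫ (X ◁ mul) ≫ h = (h ▷ X) ≫ (α_ X X X).hom ≫ (X ◁ mul) := by
      rw [hh]; exact fuseH_mod X mul comul hμ
    have hcomod : h ≫ (comul ▷ X) ≫ (α_ X X X).hom
        = (comul ▷ X) ≫ (α_ X X X).hom ≫ (X ◁ h) := by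
      rw [hh]; exact fuseH_comod X mul comul hΔ
    have hmodF : (α_ X X X).hom ≫ (X ◁ mul) ≫ F = (F ▷ X) ≫ (α_ X X X).hom ≫ (X ◁ mul) := by
      have e : (F ▷ X) ≫ (α_ X X X).hom ≫ (X ◁ mul)
          = (α_ X X X).hom ≫ (X ◁ mul) ≫ F := by
        calc (F ▷ X) ≫ (α_ X X X).hom ≫ (X ◁ mul)
            = (F ▷ X) ≫ ((h ▷ X) ≫ (α_ X X X).hom ≫ (X ◁ mul)) ≫ F := by
              rw [← hmod]
              simp only [Category.assoc]
              rw [h1, Category.comp_id]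
          _ = ((F ≫ h) ▷ X) ≫ (α_ X X X).hom ≫ (X ◁ mul) ≫ F := by
              simp only [comp_whiskerRight, Category.assoc]
          _ = (α_ X X X).hom ≫ (X ◁ mul) ≫ F := by rw [h2]; simp
      exact e.symm
    have hcomodF : F ≫ (comul ▷ X) ≫ (α_ X X X).hom
        = (comul ▷ X) ≫ (α_ X X X).hom ≫ (X ◁ F) := by
      calc F ≫ (comul ▷ X) ≫ (α_ X X X).hom
          = F ≫ (comul ▷ X) ≫ (α_ X X X).hom ≫ (X ◁ h) ≫ (X ◁ F) := by
            rw [← MonoidalCategory.whiskerLeft_comp, h1]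
            simp
        _ = F ≫ (h ≫ (comul ▷ X) ≫ (α_ X X X).hom) ≫ (X ◁ F) := by
            rw [hcomod]
            simp only [Category.assoc]
        _ = (comul ▷ X) ≫ (α_ X X X).hom ≫ (X ◁ F) := by
            simp only [Category.assoc]
            rw [reassoc_of% h2]
    have hFs : F = Phi X mul comul (Psi X one counit F) :=
      Phi_Psi X mul one comul counit h_one_mul h_comul_counit F hmodF hcomodF
    refine ⟨Psi X one counit F, ?_, ?_⟩
    · have e := Phi_mul X mul comul hμ hΔ (𝟙 X) (Psi X one counit F)
      rw [Phi_id, ← hh, ← hFs, h1] at e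
      have e2 : Phi X mul comul (comul ≫ (Psi X one counit F ⊗ₘ 𝟙 X) ≫ mul)
          = Phi X mul comul (counit ≫ one) := by
        rw [← e, Phi_counit_one X mul one comul counit h_comul_counit h_one_mul]
      have e3 := congrArg (Psi X one counit) e2
      rw [Psi_Phi X mul one comul counit h_counit_comul h_mul_one,
        Psi_Phi X mul one comul counit h_counit_comul h_mul_one, tensorHom_id] at e3
      exact e3
    · have e := Phi_mul X mul comul hμ hΔ (Psi X one counit F) (𝟙 X)
      rw [Phi_id, ← hh, ← hFs, h2] at e
      have e2 : Phi X mul comul (comul ≫ (𝟙 X ⊗ₘ Psi X one counit F) ≫ mul)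
          = Phi X mul comul (counit ≫ one) := by
        rw [← e, Phi_counit_one X mul one comul counit h_comul_counit h_one_mul]
      have e3 := congrArg (Psi X one counit) e2
      rw [Psi_Phi X mul one comul counit h_counit_comul h_mul_one,
        Psi_Phi X mul one comul counit h_counit_comul h_mul_one, id_tensorHom] at e3
      exact e3

end Fusion

/-- Let `H` be a bimonoid in a braided monoidal category.  Then `H` is a Hopf monoid
(i.e. admits an antipode) if and only if the fusion operator
`h = (H ⊗ μ) ∘ (Δ ⊗ H) : H ⊗ H ⟶ H ⊗ H` is invertible, if and only if the fusion
operator `h' = (μ ⊗ H) ∘ (H ⊗ Δ) : H ⊗ H ⟶ H ⊗ H` is invertible. -/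
theorem bimon_hopf_iff_fusion_iso {V : Type u} [Category.{v} V] [MonoidalCategory V]
    [BraidedCategory V] (H : Bimon V) :
    ((∃ s : H.X.X ⟶ H.X.X,
        H.comon.comul.hom ≫ (s ▷ H.X.X) ≫ MonObj.mul (X := H.X.X) = H.comon.counit.hom ≫ MonObj.one (X := H.X.X) ∧
        H.comon.comul.hom ≫ (H.X.X ◁ s) ≫ MonObj.mul (X := H.X.X) = H.comon.counit.hom ≫ MonObj.one (X := H.X.X)) ↔
      IsIso ((H.comon.comul.hom ▷ H.X.X) ≫ (α_ H.X.X H.X.X H.X.X).hom ≫ (H.X.X ◁ MonObj.mul (X := H.X.X)))) ∧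
    ((∃ s : H.X.X ⟶ H.X.X,
        H.comon.comul.hom ≫ (s ▷ H.X.X) ≫ MonObj.mul (X := H.X.X) = H.comon.counit.hom ≫ MonObj.one (X := H.X.X) ∧
        H.comon.comul.hom ≫ (H.X.X ◁ s) ≫ MonObj.mul (X := H.X.X) = H.comon.counit.hom ≫ MonObj.one (X := H.X.X)) ↔
      IsIso ((H.X.X ◁ H.comon.comul.hom) ≫ (α_ H.X.X H.X.X H.X.X).inv ≫ (MonObj.mul (X := H.X.X) ▷ H.X.X))) := by
  have hΔ : H.comon.comul.hom ≫ (H.X.X ◁ H.comon.comul.hom)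
      = H.comon.comul.hom ≫ (H.comon.comul.hom ▷ H.X.X) ≫ (α_ H.X.X H.X.X H.X.X).hom := by
    have := congrArg Mon.Hom.hom (ComonObj.comul_assoc (self := H.comon) H.X); exact this
  have hcc : H.comon.comul.hom ≫ (H.comon.counit.hom ▷ H.X.X) = (λ_ H.X.X).inv := by
    have := congrArg Mon.Hom.hom (ComonObj.counit_comul (self := H.comon) H.X); exact this
  have hcc' : H.comon.comul.hom ≫ (H.X.X ◁ H.comon.counit.hom) = (ρ_ H.X.X).inv := by
    have := congrArg Mon.Hom.hom (ComonObj.comul_counit (self := H.comon) H.X); exact this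
  constructor
  · exact hopf_iff_fusion H.X.X (MonObj.mul (X := H.X.X)) (MonObj.one (X := H.X.X)) H.comon.comul.hom H.comon.counit.hom
      (MonObj.mul_assoc H.X.X) (MonObj.one_mul H.X.X) (MonObj.mul_one H.X.X) hΔ
      hcc hcc'
  · have hμO : (H.comon.comul.hom.op ▷ Opposite.op H.X.X) ≫ H.comon.comul.hom.op
        = (α_ (Opposite.op H.X.X) (Opposite.op H.X.X) (Opposite.op H.X.X)).hom ≫
          (Opposite.op H.X.X ◁ H.comon.comul.hom.op) ≫ H.comon.comul.hom.op := by
      apply Quiver.Hom.unop_inj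
      simp [hΔ]
    have honeO : (H.comon.counit.hom.op ▷ Opposite.op H.X.X) ≫ H.comon.comul.hom.op
        = (λ_ (Opposite.op H.X.X)).hom := by
      apply Quiver.Hom.unop_inj
      simp [hcc]
    have hmulO : (Opposite.op H.X.X ◁ H.comon.counit.hom.op) ≫ H.comon.comul.hom.op
        = (ρ_ (Opposite.op H.X.X)).hom := by
      apply Quiver.Hom.unop_inj
      simp [hcc']
    have hΔO : (MonObj.mul (X := H.X.X)).op ≫ (Opposite.op H.X.X ◁ (MonObj.mul (X := H.X.X)).op)
        = (MonObj.mul (X := H.X.X)).op ≫ ((MonObj.mul (X := H.X.X)).op ▷ Opposite.op H.X.X) ≫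
          (α_ (Opposite.op H.X.X) (Opposite.op H.X.X) (Opposite.op H.X.X)).hom := by
      apply Quiver.Hom.unop_inj
      simp [(MonObj.mul_assoc H.X.X)]
    have hcounitO : (MonObj.mul (X := H.X.X)).op ≫ ((MonObj.one (X := H.X.X)).op ▷ Opposite.op H.X.X)
        = (λ_ (Opposite.op H.X.X)).inv := by
      apply Quiver.Hom.unop_inj
      simp [(MonObj.one_mul H.X.X)]
    have hcomulO : (MonObj.mul (X := H.X.X)).op ≫ (Opposite.op H.X.X ◁ (MonObj.one (X := H.X.X)).op)
        = (ρ_ (Opposite.op H.X.X)).inv := by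
      apply Quiver.Hom.unop_inj
      simp [(MonObj.mul_one H.X.X)]
    have iffO := hopf_iff_fusion (Opposite.op H.X.X)
      H.comon.comul.hom.op H.comon.counit.hom.op (MonObj.mul (X := H.X.X)).op (MonObj.one (X := H.X.X)).op
      hμO honeO hmulO hΔO hcounitO hcomulO
    have key : (((MonObj.mul (X := H.X.X)).op ▷ Opposite.op H.X.X) ≫
          (α_ (Opposite.op H.X.X) (Opposite.op H.X.X) (Opposite.op H.X.X)).hom ≫
          (Opposite.op H.X.X ◁ H.comon.comul.hom.op))
        = ((H.X.X ◁ H.comon.comul.hom) ≫ (α_ H.X.X H.X.X H.X.X).inv ≫ ((MonObj.mul (X := H.X.X)) ▷ H.X.X)).op := by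
      apply Quiver.Hom.unop_inj
      simp
    rw [key] at iffO
    constructor
    · rintro ⟨s, hs1, hs2⟩
      have : IsIso ((H.X.X ◁ H.comon.comul.hom) ≫ (α_ H.X.X H.X.X H.X.X).inv ≫
          ((MonObj.mul (X := H.X.X)) ▷ H.X.X)).op := by
        apply iffO.mp
        refine ⟨s.op, ?_, ?_⟩
        · apply Quiver.Hom.unop_inj; simpa using hs1
        · apply Quiver.Hom.unop_inj; simpa using hs2
      exact isIso_of_op _
    · intro hiso
      have : IsIso ((H.X.X ◁ H.comon.comul.hom) ≫ (α_ H.X.X H.X.X H.X.X).inv ≫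
          ((MonObj.mul (X := H.X.X)) ▷ H.X.X)).op := inferInstance
      obtain ⟨s', c1, c2⟩ := iffO.mpr this
      refine ⟨s'.unop, ?_, ?_⟩
      · have := congrArg Quiver.Hom.unop c1
        simpa using this
      · have := congrArg Quiver.Hom.unop c2
        simpa using this
end
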